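/- arXiv:math/0609417 — 8 statements merged into one kernel-verified Lean document; each statement's English description precedes it below -/
import Mathlib

section
/- Let F be a field, n ≥ 2, and ε ∈ F a primitive n-th root of unity. With X_a = diag(ε^{n-1}, …, ε, 1) and X_b the cyclic permutation matrix with (X_b)_{ij} = 1 iff j ≡ i+1 (mod n), define for each (i,j) ∈ Z_n × Z_n the one-dimensional subspace R_{(i,j)} = span(X_a^i X_b^j) of M_n(F). Then M_n(F) is the internal direct sum of the subspaces R_t, t ∈ Z_n × Z_n, and R_s · R_t ⊆ R_{s+t} for all s, t ∈ Z_n × Z_n; that is, this family of subspaces is a (Z_n × Z_n)-grading of the algebra M_n(F), called the ε-grading. -/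
open Matrix
open Fin.NatCast

namespace EpsGrading

/-- cyclic shift matrix by `c` -/
def P (F : Type*) [Field F] {n : ℕ} (c : Fin n) : Matrix (Fin n) (Fin n) F :=
  Matrix.of fun k m => if m = k + c then 1 else 0

theorem P_mul {F : Type*} [Field F] {n : ℕ} (c d : Fin n) :
    P F c * P F d = P F (c + d) := by
  ext k m
  simp only [P, Matrix.mul_apply, Matrix.of_apply, ite_mul, one_mul, zero_mul]
  rw [Finset.sum_ite_eq' Finset.univ (k + c) (fun l => if m = l + d then (1:F) else 0)]
  simp [add_assoc]

theorem P_zero {F : Type*} [Field F] {n : ℕ} [NeZero n] : P F (0 : Fin n) = 1 := by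
  ext k m
  simp [P, Matrix.one_apply, eq_comm]

theorem P_pow {F : Type*} [Field F] {n : ℕ} [NeZero n] (c : Fin n) (j : ℕ) :
    P F c ^ j = P F (j • c) := by
  induction j with
  | zero => simp [P_zero]
  | succ j ih => rw [pow_succ, ih, P_mul, succ_nsmul]

theorem diag_mul_P {F : Type*} [Field F] {n : ℕ} (d : Fin n → F) (c : Fin n) :
    Matrix.diagonal d * P F c = Matrix.of fun k m => if m = k + c then d k else 0 := by
  ext k m
  simp [P, Matrix.diagonal_mul, mul_ite]

theorem P_mul_diag {F : Type*} [Field F] {n : ℕ} (d : Fin n → F) (c : Fin n) :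
    P F c * Matrix.diagonal d = Matrix.of fun k m => if m = k + c then d m else 0 := by
  ext k m
  simp [P, Matrix.mul_diagonal, ite_mul]

theorem pow_mod_self {M : Type*} [Monoid M] {n : ℕ} {x : M} (h : x ^ n = 1) (a : ℕ) :
    x ^ a = x ^ (a % n) := by
  conv_lhs => rw [← Nat.div_add_mod a n]
  rw [pow_add, pow_mul, h, one_pow, one_mul]

theorem comm_gen {F : Type*} [Field F] {M : Type*} [Ring M] [Module F M]
    [SMulCommClass F M M] [IsScalarTower F M M] {A B : M} {c : F}
    (h : B * A = c • (A * B)) (i j : ℕ) :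
    B ^ j * A ^ i = c ^ (i * j) • (A ^ i * B ^ j) := by
  have h1 : ∀ i : ℕ, B * A ^ i = c ^ i • (A ^ i * B) := by
    intro i
    induction i with
    | zero => simp
    | succ i ih =>
      rw [pow_succ, ← mul_assoc, ih, smul_mul_assoc, mul_assoc, h, mul_smul_comm,
        smul_smul, pow_succ, ← mul_assoc, mul_comm (c ^ i) c]
  induction j with
  | zero => simp
  | succ j ih =>
    rw [pow_succ, mul_assoc, h1, mul_smul_comm, ← mul_assoc, ih, smul_mul_assoc,
      smul_smul, mul_assoc, ← pow_succ, ← pow_add, Nat.mul_succ, Nat.add_comm i (i * j)]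

theorem indep {F : Type*} [Field F] {n : ℕ} [NeZero n] (hn : 2 ≤ n) {ε : F}
    (hε : IsPrimitiveRoot ε n) :
    LinearIndependent F (fun t : ZMod n × ZMod n =>
      (Matrix.of fun k m : Fin n =>
        if m = k + ((t.2.val : ℕ) : Fin n) then ε ^ ((n - 1 - (k : ℕ)) * t.1.val)
        else 0)) := by
  have hinj : ∀ a b : ZMod n, ((a.val : ℕ) : Fin n) = ((b.val : ℕ) : Fin n) → a = b := by
    intro a b h
    have := congrArg Fin.val h
    rw [Fin.val_natCast, Fin.val_natCast, Nat.mod_eq_of_lt (ZMod.val_lt a),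
      Nat.mod_eq_of_lt (ZMod.val_lt b)] at this
    exact ZMod.val_injective n this
  rw [Fintype.linearIndependent_iff]
  intro c hc t₀
  obtain ⟨i₀, j₀⟩ := t₀
  have key : ∀ k : Fin n,
      ∑ i : ZMod n, c (i, j₀) * ε ^ ((n - 1 - (k : ℕ)) * i.val) = 0 := by
    intro k
    have h0 := congrFun (congrFun hc k) (k + ((j₀.val : ℕ) : Fin n))
    simp only [Matrix.sum_apply, Matrix.smul_apply, Matrix.of_apply, smul_eq_mul,
      Matrix.zero_apply, mul_ite, mul_zero, add_right_inj] at h0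
    rw [Fintype.sum_prod_type] at h0
    have hcond : ∀ y : ZMod n, (((j₀.val : ℕ) : Fin n) = ((y.val : ℕ) : Fin n)) = (y = j₀) := by
      intro y
      simp only [eq_iff_iff]
      exact ⟨fun h => hinj _ _ h.symm, fun h => by rw [h]⟩
    simp only [hcond, Finset.sum_ite_eq' Finset.univ, Finset.mem_univ, if_true] at h0
    exact h0
  set v : Fin n → F := fun m => ε ^ (m : ℕ) with hv
  have hdet : (Matrix.vandermonde v).det ≠ 0 := by
    rw [Matrix.det_vandermonde_ne_zero_iff]
    intro a b hab
    exact Fin.ext (hε.pow_inj a.isLt b.isLt hab)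
  set cvec : Fin n → F := fun i' => c ((((i' : ℕ) : ZMod n)), j₀) with hcvec
  have hbij : Function.Bijective (fun i' : Fin n => ((i' : ℕ) : ZMod n)) := by
    constructor
    · intro a b hab
      have := congrArg ZMod.val hab
      rw [ZMod.val_cast_of_lt a.isLt, ZMod.val_cast_of_lt b.isLt] at this
      exact Fin.ext this
    · intro z
      exact ⟨⟨z.val, ZMod.val_lt z⟩, ZMod.natCast_rightInverse z⟩
  have hmv : Matrix.vandermonde v *ᵥ cvec = 0 := by
    funext m
    have hk := key ⟨n - 1 - (m : ℕ), by omega⟩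
    have hm : n - 1 - (n - 1 - (m : ℕ)) = (m : ℕ) := by
      have := m.isLt; omega
    rw [show ((⟨n - 1 - (m : ℕ), by omega⟩ : Fin n) : ℕ) = n - 1 - (m : ℕ) from rfl, hm] at hk
    rw [Pi.zero_apply, Matrix.mulVec, dotProduct]
    rw [← hk, ← Function.Bijective.sum_comp hbij
      (fun i => c (i, j₀) * ε ^ ((m : ℕ) * i.val))]
    apply Finset.sum_congr rfl
    intro i' _
    rw [Matrix.vandermonde_apply]
    simp only [hcvec, hv]
    rw [ZMod.val_cast_of_lt i'.isLt, ← pow_mul, mul_comm]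
  have hzero := Matrix.eq_zero_of_mulVec_eq_zero hdet hmv
  have := congrFun hzero ⟨i₀.val, ZMod.val_lt i₀⟩
  simpa [hcvec, ZMod.natCast_rightInverse i₀] using this

end EpsGrading

open EpsGrading

/-- The subspaces `R_{(i,j)} = span(X_a^i X_b^j)`, for
`(i,j) ∈ Z_n × Z_n`, form a `Z_n × Z_n`-grading of `M_n(F)` (the ε-grading):
`M_n(F)` is their internal direct sum and `R_s · R_t ⊆ R_{s+t}`. -/
theorem stmt1 (F : Type*) [Field F] (n : ℕ) (hn : 2 ≤ n) (ε : F)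
    (hε : IsPrimitiveRoot ε n)
    (Xa Xb : Matrix (Fin n) (Fin n) F)
    (hXa : Xa = Matrix.diagonal fun i : Fin n => ε ^ (n - 1 - (i : ℕ)))
    (hXb : Xb = Matrix.of fun i j : Fin n =>
      if ((j : ℕ)) % n = ((i : ℕ) + 1) % n then (1 : F) else 0)
    (R : ZMod n × ZMod n → Submodule F (Matrix (Fin n) (Fin n) F))
    (hR : R = fun t => Submodule.span F {Xa ^ (t.1.val) * Xb ^ (t.2.val)}) :
    DirectSum.IsInternal R ∧
    ∀ s t : ZMod n × ZMod n, R s * R t ≤ R (s + t) := by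
  haveI : NeZero n := ⟨by omega⟩
  -- Xb is the shift matrix
  have hXb' : Xb = P F (1 : Fin n) := by
    rw [hXb]
    ext k m
    simp only [Matrix.of_apply, P]
    congr 1
    simp only [eq_iff_iff]
    rw [Nat.mod_eq_of_lt m.isLt, Fin.ext_iff, Fin.val_add, Fin.val_one' n,
      Nat.mod_eq_of_lt (show 1 < n by omega)]
  have hXbpow : ∀ j : ℕ, Xb ^ j = P F ((j : ℕ) : Fin n) := by
    intro j
    rw [hXb', P_pow]
    congr 1
    exact nsmul_one j
  have hXapow : ∀ i : ℕ,
      Xa ^ i = Matrix.diagonal fun k : Fin n => ε ^ ((n - 1 - (k : ℕ)) * i) := by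
    intro i
    have hfun : ((fun l : Fin n => ε ^ (n - 1 - (l : ℕ))) ^ i) =
        fun k : Fin n => ε ^ ((n - 1 - (k : ℕ)) * i) := by
      funext k
      rw [Pi.pow_apply, ← pow_mul]
    rw [hXa, Matrix.diagonal_pow, hfun]
  set g : ZMod n × ZMod n → Matrix (Fin n) (Fin n) F :=
    fun t => Xa ^ (t.1.val) * Xb ^ (t.2.val) with hg
  have hgeq : g = fun t : ZMod n × ZMod n =>
      (Matrix.of fun k m : Fin n =>
        if m = k + ((t.2.val : ℕ) : Fin n) then ε ^ ((n - 1 - (k : ℕ)) * t.1.val)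
        else 0) := by
    funext t
    show Xa ^ (t.1.val) * Xb ^ (t.2.val) = _
    rw [hXapow, hXbpow, diag_mul_P]
  have hli : LinearIndependent F g := by
    rw [hgeq]; exact indep hn hε
  have hspan : Submodule.span F (Set.range g) = ⊤ := by
    apply hli.span_eq_top_of_card_eq_finrank
    rw [Fintype.card_prod, ZMod.card, Module.finrank_matrix, Fintype.card_fin,
      Module.finrank_self, mul_one]
  have hRg : R = fun t => Submodule.span F {g t} := hR
  constructor
  · rw [hRg]
    exact DirectSum.isInternal_submodule_of_iSupIndep_of_iSup_eq_top
      hli.iSupIndep_span_singleton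
      (by rw [← Submodule.span_range_eq_iSup, hspan])
  · -- multiplicativity
    have hε0 : ε ≠ 0 := hε.ne_zero (by omega)
    have hXan : Xa ^ n = 1 := by
      rw [hXapow n]
      have : (fun k : Fin n => ε ^ ((n - 1 - (k : ℕ)) * n)) = fun _ => (1 : F) := by
        funext k
        rw [mul_comm, pow_mul, hε.pow_eq_one, one_pow]
      rw [this, Matrix.diagonal_one]
    have hXbn : Xb ^ n = 1 := by
      rw [hXbpow n, Fin.natCast_self, P_zero]
    have hcomm : Xb * Xa = ε⁻¹ • (Xa * Xb) := by
      rw [eq_inv_smul_iff₀ hε0, hXa, hXb', P_mul_diag, diag_mul_P]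
      ext k m
      simp only [Matrix.smul_apply, Matrix.of_apply, smul_ite, smul_eq_mul, smul_zero]
      by_cases hkm : m = k + 1
      · rw [if_pos hkm, if_pos hkm, hkm, Fin.val_add, Fin.val_one' n,
          Nat.mod_eq_of_lt (show 1 < n by omega)]
        rcases Nat.lt_or_ge ((k : ℕ) + 1) n with h | h
        · rw [Nat.mod_eq_of_lt h, ← pow_succ']
          congr 1
          omega
        · have hk : (k : ℕ) = n - 1 := by have := k.isLt; omega
          have : ((k : ℕ) + 1) % n = 0 := by
            have : (k : ℕ) + 1 = n := by omega
            simp [this]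
          rw [this, hk, Nat.sub_self, Nat.sub_zero, pow_zero, ← pow_succ',
            Nat.sub_add_cancel (by omega), hε.pow_eq_one]
      · rw [if_neg hkm, if_neg hkm, mul_zero]
    have hBA := fun i j => comm_gen hcomm i j
    intro s t
    rw [hRg]
    simp only
    rw [Submodule.span_mul_span, Set.singleton_mul_singleton]
    rw [Submodule.span_le, Set.singleton_subset_iff, SetLike.mem_coe]
    have hprod : g s * g t = (ε⁻¹ ^ (t.1.val * s.2.val)) • g (s + t) := by
      rw [hg]
      simp only
      calc Xa ^ s.1.val * Xb ^ s.2.val * (Xa ^ t.1.val * Xb ^ t.2.val)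
          = Xa ^ s.1.val * (Xb ^ s.2.val * Xa ^ t.1.val) * Xb ^ t.2.val := by
            rw [mul_assoc, mul_assoc, mul_assoc]
        _ = (ε⁻¹ ^ (t.1.val * s.2.val)) •
              (Xa ^ s.1.val * Xa ^ t.1.val * (Xb ^ s.2.val * Xb ^ t.2.val)) := by
            rw [hBA t.1.val s.2.val, mul_smul_comm, smul_mul_assoc]
            congr 1
            rw [mul_assoc, mul_assoc, mul_assoc]
        _ = (ε⁻¹ ^ (t.1.val * s.2.val)) •
              (Xa ^ ((s + t).1.val) * Xb ^ ((s + t).2.val)) := by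
            congr 1
            rw [← pow_add, ← pow_add, pow_mod_self hXan, pow_mod_self hXbn,
              Prod.fst_add, Prod.snd_add, ZMod.val_add, ZMod.val_add]
    rw [hprod]
    exact Submodule.smul_mem _ _ (Submodule.mem_span_singleton_self _)
end

section
/- Let F be a field, n ≥ 2, ε ∈ F a primitive n-th root of unity, and let R = M_n(F) carry the ε-grading by T = Z_n × Z_n with components R_{(i,j)} = span(X_a^i X_b^j). Let Φ ∈ M_n(F) be invertible and let φ : R → R be the antiautomorphism φ(X) = Φ^{-1} Xᵗ Φ. If φ(R_t) ⊆ R_t for every t ∈ T, then n = 2, and Φ is a nonzero scalar multiple of one of the four matrices I, X_a, X_b, X_a X_b. -/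
open Matrix

/-- If the antiautomorphism `φ(X) = Φ⁻¹ Xᵗ Φ` of `M_n(F)` preserves
every component of the ε-grading by `Z_n × Z_n`, then `n = 2` and `Φ` is a nonzero
scalar multiple of one of `I`, `X_a`, `X_b`, `X_a X_b`. -/
theorem stmt3 (F : Type*) [Field F] (n : ℕ) (hn : 2 ≤ n) (ε : F)
    (hε : IsPrimitiveRoot ε n)
    (Xa Xb : Matrix (Fin n) (Fin n) F)
    (hXa : Xa = Matrix.diagonal fun i : Fin n => ε ^ (n - 1 - (i : ℕ)))
    (hXb : Xb = Matrix.of fun i j : Fin n =>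
      if ((j : ℕ)) % n = ((i : ℕ) + 1) % n then (1 : F) else 0)
    (R : ZMod n × ZMod n → Submodule F (Matrix (Fin n) (Fin n) F))
    (hR : R = fun t => Submodule.span F {Xa ^ (t.1.val) * Xb ^ (t.2.val)})
    (Φ : Matrix (Fin n) (Fin n) F) (hΦ : IsUnit Φ)
    (hgr : ∀ t : ZMod n × ZMod n, ∀ x ∈ R t, Φ⁻¹ * xᵀ * Φ ∈ R t) :
    n = 2 ∧ ∃ c : F, c ≠ 0 ∧
      (Φ = c • (1 : Matrix (Fin n) (Fin n) F) ∨ Φ = c • Xa ∨ Φ = c • Xb ∨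
        Φ = c • (Xa * Xb)) := by
  haveI : NeZero n := ⟨by omega⟩
  haveI : Fact (1 < n) := ⟨by omega⟩
  have hdet : IsUnit Φ.det := (Matrix.isUnit_iff_isUnit_det Φ).mp hΦ
  have hinv : Φ * Φ⁻¹ = 1 := Matrix.mul_nonsing_inv Φ hdet
  have hone : ((1 : Fin n) : ℕ) = 1 := by rw [Fin.val_one']; exact Nat.mod_eq_of_lt hn
  -- the two span conditions, turned into matrix equations
  have hspan : ∀ t : ZMod n × ZMod n,
      ∃ c : F, (Xa ^ t.1.val * Xb ^ t.2.val)ᵀ * Φ = c • (Φ * Xa ^ t.1.val * Xb ^ t.2.val) := by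
    intro t
    have hm : Xa ^ t.1.val * Xb ^ t.2.val ∈ R t := by
      rw [hR]; exact Submodule.mem_span_singleton_self _
    have h2 := hgr t _ hm
    rw [hR] at h2
    rw [Submodule.mem_span_singleton] at h2
    obtain ⟨c, hc⟩ := h2
    refine ⟨c, ?_⟩
    have h3 := congrArg (fun X => Φ * X) hc
    simp only [Matrix.mul_smul, ← Matrix.mul_assoc, hinv, Matrix.one_mul] at h3
    exact h3.symm
  -- extract the Xa equation
  obtain ⟨c, hc⟩ := hspan (1, 0)
  rw [show ((1 : ZMod n), (0 : ZMod n)).1.val = 1 from ZMod.val_one n,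
      show ((1 : ZMod n), (0 : ZMod n)).2.val = 0 from ZMod.val_zero,
      pow_one, pow_zero, mul_one, mul_one] at hc
  rw [hXa, Matrix.diagonal_transpose] at hc
  have hE1 : ∀ i j : Fin n, ε ^ (n - 1 - (i : ℕ)) * Φ i j
      = c * (Φ i j * ε ^ (n - 1 - (j : ℕ))) := by
    intro i j
    have := congrFun (congrFun hc i) j
    simpa [Matrix.diagonal_mul, Matrix.mul_diagonal, hXa] using this
  -- extract the Xb equation
  obtain ⟨c', hc'⟩ := hspan (0, 1)
  rw [show ((0 : ZMod n), (1 : ZMod n)).1.val = 0 from ZMod.val_zero,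
      show ((0 : ZMod n), (1 : ZMod n)).2.val = 1 from ZMod.val_one n,
      pow_one, pow_zero, one_mul, mul_one] at hc'
  have hcond : ∀ i j : Fin n, (((j : ℕ)) % n = ((i : ℕ) + 1) % n) ↔ j = i + 1 := by
    intro i j
    rw [Nat.mod_eq_of_lt j.isLt]
    constructor
    · intro h
      apply Fin.ext
      rw [Fin.add_def, hone]
      exact h
    · intro h
      rw [h, Fin.add_def, hone]
  have hXb' : ∀ i j : Fin n, Xb i j = if j = i + 1 then 1 else 0 := by
    intro i j
    rw [hXb]
    simp only [Matrix.of_apply, hcond i j]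
  have hE2 : ∀ i j : Fin n, Φ (i - 1) j = c' * Φ i (j - 1) := by
    intro i j
    have hthis := congrFun (congrFun hc' i) j
    rw [Matrix.smul_apply, smul_eq_mul] at hthis
    have hl : (Xbᵀ * Φ) i j = Φ (i - 1) j := by
      rw [Matrix.mul_apply]
      rw [Finset.sum_eq_single (i - 1)]
      · rw [Matrix.transpose_apply, hXb', if_pos (sub_add_cancel i 1).symm, one_mul]
      · intro k _ hk
        rw [Matrix.transpose_apply, hXb', if_neg, zero_mul]
        intro h
        exact hk (by rw [h]; exact (add_sub_cancel_right k 1).symm)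
      · intro h; exact absurd (Finset.mem_univ _) h
    have hr : (Φ * Xb) i j = Φ i (j - 1) := by
      rw [Matrix.mul_apply]
      rw [Finset.sum_eq_single (j - 1)]
      · rw [hXb', if_pos (sub_add_cancel j 1).symm, mul_one]
      · intro k _ hk
        rw [hXb', if_neg, mul_zero]
        intro h
        exact hk (by rw [h]; exact (add_sub_cancel_right k 1).symm)
      · intro h; exact absurd (Finset.mem_univ _) h
    rw [hl, hr] at hthis
    exact hthis
  -- a nonzero entry
  have hΦne : ∃ i j, Φ i j ≠ 0 := by
    by_contra h
    push_neg at h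
    have hz : Φ = 0 := by ext i j; exact h i j
    rw [hz, Matrix.det_zero] at hdet
    exact hdet.ne_zero rfl
  obtain ⟨i₀, j₀, hij₀⟩ := hΦne
  have hεne : ε ≠ 0 := fun h => by
    have := hε.pow_eq_one
    rw [h, zero_pow (by omega)] at this
    exact zero_ne_one this
  have hrel : ∀ i j : Fin n, Φ i j ≠ 0 →
      ε ^ (n - 1 - (i : ℕ)) = c * ε ^ (n - 1 - (j : ℕ)) := by
    intro i j h
    have h1 := hE1 i j
    have h2 : ε ^ (n - 1 - (i : ℕ)) * Φ i j = (c * ε ^ (n - 1 - (j : ℕ))) * Φ i j := by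
      linear_combination h1
    exact mul_right_cancel₀ h h2
  -- the second nonzero entry
  have hne2 : Φ (i₀ + 1) (j₀ - 1) ≠ 0 := by
    have h := hE2 (i₀ + 1) j₀
    rw [show i₀ + 1 - 1 = i₀ from add_sub_cancel_right i₀ 1] at h
    intro h0
    rw [h0, mul_zero] at h
    exact hij₀ h
  -- derive n = 2
  have hkey : ε ^ ((n - 1 - ((i₀ + 1 : Fin n) : ℕ)) + (n - 1 - (j₀ : ℕ)))
      = ε ^ ((n - 1 - (i₀ : ℕ)) + (n - 1 - ((j₀ - 1 : Fin n) : ℕ))) := by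
    rw [pow_add, pow_add, hrel _ _ hne2, hrel _ _ hij₀]
    ring
  have hpowmod : ∀ m : ℕ, ε ^ m = ε ^ (m % n) := by
    intro m
    conv_lhs => rw [← Nat.div_add_mod m n]
    rw [pow_add, pow_mul, hε.pow_eq_one, one_pow, one_mul]
  have hmod : ((n - 1 - ((i₀ + 1 : Fin n) : ℕ)) + (n - 1 - (j₀ : ℕ))) % n
      = ((n - 1 - (i₀ : ℕ)) + (n - 1 - ((j₀ - 1 : Fin n) : ℕ))) % n :=
    hε.pow_inj (Nat.mod_lt _ (by omega)) (Nat.mod_lt _ (by omega))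
      (by rw [← hpowmod, ← hpowmod]; exact hkey)
  have hn2 : n = 2 := by
    set A := ((i₀ + 1 : Fin n) : ℕ) with hA
    set B := ((j₀ - 1 : Fin n) : ℕ) with hB
    have hAlt : A < n := (i₀ + 1).isLt
    have hBlt : B < n := (j₀ - 1).isLt
    have hilt : (i₀ : ℕ) < n := i₀.isLt
    have hjlt : (j₀ : ℕ) < n := j₀.isLt
    have dA : (n : ℤ) ∣ ((i₀ : ℕ) + 1 : ℤ) - A := by
      have hAe : A = ((i₀ : ℕ) + 1) % n := by rw [hA, Fin.add_def, hone]
      rw [hAe]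
      exact_mod_cast (Nat.mod_modEq ((i₀ : ℕ) + 1) n).dvd
    have dB : (n : ℤ) ∣ ((n : ℤ) - 1 + (j₀ : ℕ)) - B := by
      have hBe : B = (n - 1 + (j₀ : ℕ)) % n := by rw [hB, Fin.sub_def, hone]
      rw [hBe]
      have hd := (Nat.mod_modEq (n - 1 + (j₀ : ℕ)) n).dvd
      have hcast : ((n - 1 + (j₀ : ℕ) : ℕ) : ℤ) = (n : ℤ) - 1 + (j₀ : ℕ) := by
        push_cast; omega
      rw [hcast] at hd
      exact hd
    have dM := Nat.modEq_iff_dvd.mp (hmod : _ ≡ _ [MOD n])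
    obtain ⟨k1, hk1⟩ := dM
    obtain ⟨k2, hk2⟩ := dA
    obtain ⟨k3, hk3⟩ := dB
    have e1 : (((n - 1 - (i₀ : ℕ)) + (n - 1 - B) : ℕ) : ℤ)
        = 2 * n - 2 - (i₀ : ℕ) - B := by push_cast; omega
    have e2 : (((n - 1 - A) + (n - 1 - (j₀ : ℕ)) : ℕ) : ℤ)
        = 2 * n - 2 - A - (j₀ : ℕ) := by push_cast; omega
    rw [e1, e2] at hk1
    have h2dvd : (n : ℤ) ∣ 2 := ⟨k1 + k2 - k3 + 1, by linarith⟩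
    have := Int.le_of_dvd (by norm_num) h2dvd
    omega
  subst hn2
  refine ⟨rfl, ?_⟩
  -- now n = 2
  have hε2 : ε = -1 := hε.eq_neg_one_of_two_right
  have h2F : (2 : F) ≠ 0 := by
    intro h
    have hne1 := hε.ne_one (by norm_num)
    apply hne1
    rw [hε2]
    linear_combination -h
  have hdet2 : Φ 0 0 * Φ 1 1 - Φ 0 1 * Φ 1 0 ≠ 0 := by
    rw [← Matrix.det_fin_two]
    exact hdet.ne_zero
  have e00 := hE1 0 0
  have e01 := hE1 0 1
  have e10 := hE1 1 0
  have e11 := hE1 1 1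
  simp only [hε2, Fin.isValue, Fin.val_zero, Fin.val_one] at e00 e01 e10 e11
  norm_num at e00 e01 e10 e11
  have f00 := hE2 0 0
  have f01 := hE2 0 1
  have f10 := hE2 1 0
  have f11 := hE2 1 1
  have hs0 : (0 : Fin 2) - 1 = 1 := rfl
  have hs1 : (1 : Fin 2) - 1 = 0 := rfl
  rw [hs0] at f00 f01
  rw [hs1] at f10 f11
  rw [hs1] at f01
  rw [hs0] at f10
  -- f00 : Φ 1 0 = c' * Φ 0 1 ; f01 : Φ 1 1 = c' * Φ 0 0
  -- f10 : Φ 0 0 = c' * Φ 1 1 ; f11 : Φ 0 1 = c' * Φ 1 0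
  have hXa2 : ∀ i j : Fin 2, Xa i j = if i = j then (if i = 0 then -1 else 1) else 0 := by
    intro i j
    rw [hXa, hε2]
    fin_cases i <;> fin_cases j <;> simp [Matrix.diagonal_apply]
  have hXb2 : ∀ i j : Fin 2, Xb i j = if i = j then 0 else 1 := by
    intro i j
    rw [hXb]
    fin_cases i <;> fin_cases j <;> simp
  by_cases ha : Φ 0 0 = 0
  · -- antidiagonal case
    have he : Φ 1 1 = 0 := by rw [f01, ha, mul_zero]
    have hb : Φ 0 1 ≠ 0 := by
      intro h; apply hdet2; rw [ha, he, h]; ring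
    have hc'2 : c' * c' = 1 := by
      have hq : (c' * c') * Φ 0 1 = 1 * Φ 0 1 := by
        linear_combination -f11 - c' * f00
      exact mul_right_cancel₀ hb hq
    rcases mul_eq_zero.mp (show (c' - 1) * (c' + 1) = 0 by linear_combination hc'2) with h | h
    · have hc'1 : c' = 1 := by linear_combination h
      refine ⟨Φ 0 1, hb, Or.inr (Or.inr (Or.inl ?_))⟩
      ext i j
      fin_cases i <;> fin_cases j <;>
        simp [hXb2, ha, he, f00, hc'1, Matrix.smul_apply, smul_eq_mul]
    · have hc'1 : c' = -1 := by linear_combination h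
      refine ⟨-Φ 0 1, neg_ne_zero.mpr hb, Or.inr (Or.inr (Or.inr ?_))⟩
      ext i j
      fin_cases i <;> fin_cases j <;>
        simp [Matrix.mul_apply, Fin.sum_univ_two, hXa2, hXb2, ha, he, f00, hc'1,
          Matrix.smul_apply, smul_eq_mul]
  · -- diagonal case
    have hcone : c = 1 := by
      have hq : c * Φ 0 0 = 1 * Φ 0 0 := by linear_combination -e00
      exact mul_right_cancel₀ ha hq
    have hb : Φ 0 1 = 0 := by
      have hq : (2 : F) * Φ 0 1 = 0 := by
        rw [hcone] at e01
        linear_combination -e01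
      exact (mul_eq_zero.mp hq).resolve_left h2F
    have hd : Φ 1 0 = 0 := by
      have hq : (2 : F) * Φ 1 0 = 0 := by
        rw [hcone] at e10
        linear_combination e10
      exact (mul_eq_zero.mp hq).resolve_left h2F
    have hc'2 : c' * c' = 1 := by
      have hq : (c' * c') * Φ 0 0 = 1 * Φ 0 0 := by
        linear_combination -f10 - c' * f01
      exact mul_right_cancel₀ ha hq
    rcases mul_eq_zero.mp (show (c' - 1) * (c' + 1) = 0 by linear_combination hc'2) with h | h
    · have hc'1 : c' = 1 := by linear_combination h
      refine ⟨Φ 0 0, ha, Or.inl ?_⟩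
      ext i j
      fin_cases i <;> fin_cases j <;>
        simp [Matrix.one_apply, hb, hd, f01, hc'1, Matrix.smul_apply, smul_eq_mul]
    · have hc'1 : c' = -1 := by linear_combination h
      refine ⟨-Φ 0 0, neg_ne_zero.mpr ha, Or.inr (Or.inl ?_)⟩
      ext i j
      fin_cases i <;> fin_cases j <;>
        simp [hXa2, hb, hd, f01, hc'1, Matrix.smul_apply, smul_eq_mul]
end

section
/- Let F be a field of characteristic different from 2, G an abelian group, and let R = M_n(F) carry the elementary G-grading defined by (g_1, …, g_n) ∈ G^n. Let Φ ∈ M_n(F) be invertible with Φᵗ = Φ, and suppose the involution X ↦ Φ^{-1} Xᵗ Φ satisfies (R_g)^* ⊆ R_g for every g ∈ G. Then there exist h ∈ G and a permutation σ of {1, …, n} with σ ∘ σ = id such that g_i g_{σ(i)} = h for all i. -/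
open Matrix

open Finset

lemma pairlem {α β : Type*} [DecidableEq α] [DecidableEq β] (f : α → β) (ι : β → β)
    (hι : ∀ b, ι (ι b) = b) :
    ∀ s : Finset α,
      (∀ b, (s.filter (fun i => f i = b)).card = (s.filter fun i => f i = ι b).card) →
      ∃ σ : α → α, ∀ i ∈ s, σ i ∈ s ∧ σ (σ i) = i ∧ f (σ i) = ι (f i) := by
  classical
  intro s
  induction s using Finset.strongInduction with
  | _ s ih =>
    intro hcard
    rcases s.eq_empty_or_nonempty with rfl | ⟨i, hi⟩
    · exact ⟨id, by simp⟩
    by_cases hfix : ι (f i) = f i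
    · have hcc : ∀ b, ((s.erase i).filter (fun x => f x = b)).card
          = ((s.erase i).filter fun x => f x = ι b).card := by
        intro b
        by_cases hb : b = f i
        · subst hb; rw [hfix]
        · have hib : ι b ≠ f i := fun hh => hb (by rw [← hι b, hh, hfix])
          rw [Finset.filter_erase, Finset.filter_erase,
            Finset.erase_eq_of_notMem (by simp [Ne.symm hb]),
            Finset.erase_eq_of_notMem (by simp [Ne.symm hib])]
          exact hcard b
      obtain ⟨σ', hσ'⟩ := ih (s.erase i) (Finset.erase_ssubset hi) hcc
      refine ⟨fun x => if x = i then i else σ' x, ?_⟩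
      intro x hx
      by_cases hxi : x = i
      · subst hxi
        refine ⟨?_, ?_, ?_⟩ <;> simp [hx, hfix]
      · obtain ⟨hm, hfixpt, hf⟩ := hσ' x (Finset.mem_erase.2 ⟨hxi, hx⟩)
        have h1 : σ' x ≠ i := (Finset.mem_erase.1 hm).1
        have h2 : σ' x ∈ s := (Finset.mem_erase.1 hm).2
        simp only [if_neg hxi, if_neg h1]
        exact ⟨h2, hfixpt, hf⟩
    · have hpos : 0 < (s.filter fun x => f x = ι (f i)).card := by
        rw [← hcard (f i)]
        exact Finset.card_pos.2 ⟨i, Finset.mem_filter.2 ⟨hi, rfl⟩⟩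
      obtain ⟨j, hjm⟩ := Finset.card_pos.1 hpos
      obtain ⟨hj, hfj⟩ := Finset.mem_filter.1 hjm
      have hji : j ≠ i := fun hh => hfix (by rw [← hfj, hh])
      set t := (s.erase i).erase j with ht
      have hts : t ⊂ s := by
        refine Finset.ssubset_of_subset_of_ssubset ?_ (Finset.erase_ssubset hi)
        exact Finset.erase_subset _ _
      have hcc : ∀ b, (t.filter (fun x => f x = b)).card
          = (t.filter fun x => f x = ι b).card := by
        intro b
        have key : ∀ c, (t.filter fun x => f x = c).card
            = (s.filter fun x => f x = c).card - (if f i = c then 1 else 0)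
              - (if f j = c then 1 else 0) := by
          intro c
          rw [ht, Finset.filter_erase, Finset.filter_erase]
          by_cases hic : f i = c
          · have hjc : ¬ f j = c := by
              rw [hfj, ← hic]; exact hfix
            have hjm' : j ∉ (s.filter (fun x => f x = c)).erase i :=
              fun hm => hjc (Finset.mem_filter.1 (Finset.mem_erase.1 hm).2).2
            rw [Finset.erase_eq_of_notMem hjm',
              Finset.card_erase_of_mem (Finset.mem_filter.2 ⟨hi, hic⟩),
              if_pos hic, if_neg hjc]
            omega
          · have him' : i ∉ s.filter (fun x => f x = c) :=
              fun hm => hic (Finset.mem_filter.1 hm).2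
            rw [Finset.erase_eq_of_notMem him']
            by_cases hjc : f j = c
            · rw [Finset.card_erase_of_mem (Finset.mem_filter.2 ⟨hj, hjc⟩),
                if_neg hic, if_pos hjc]
              omega
            · have hjm' : j ∉ s.filter (fun x => f x = c) :=
                fun hm => hjc (Finset.mem_filter.1 hm).2
              rw [Finset.erase_eq_of_notMem hjm',
                if_neg hic, if_neg hjc]
              omega
        rw [key b, key (ι b), hcard b]
        have e1 : (f i = b) ↔ (f j = ι b) := by
          constructor
          · intro hh; rw [hfj, hh]
          · intro hh
            have h2 : ι (f i) = ι b := hfj.symm.trans hh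
            calc f i = ι (ι (f i)) := (hι _).symm
              _ = ι (ι b) := by rw [h2]
              _ = b := hι b
        have e2 : (f j = b) ↔ (f i = ι b) := by
          constructor
          · intro hh
            calc f i = ι (ι (f i)) := (hι _).symm
              _ = ι (f j) := by rw [hfj]
              _ = ι b := by rw [hh]
          · intro hh
            calc f j = ι (f i) := hfj
              _ = ι (ι b) := by rw [hh]
              _ = b := hι b
        have E1 : (if f i = b then 1 else 0 : ℕ) = if f j = ι b then 1 else 0 := by
          by_cases hh : f i = b
          · rw [if_pos hh, if_pos (e1.1 hh)]
          · rw [if_neg hh, if_neg (fun hc => hh (e1.2 hc))]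
        have E2 : (if f j = b then 1 else 0 : ℕ) = if f i = ι b then 1 else 0 := by
          by_cases hh : f j = b
          · rw [if_pos hh, if_pos (e2.1 hh)]
          · rw [if_neg hh, if_neg (fun hc => hh (e2.2 hc))]
        rw [E1, E2]
        omega
      obtain ⟨σ', hσ'⟩ := ih t hts hcc
      refine ⟨fun x => if x = i then j else if x = j then i else σ' x, ?_⟩
      intro x hx
      by_cases hxi : x = i
      · subst hxi
        refine ⟨?_, ?_, ?_⟩ <;> simp [hj, hji, hfj]
      · by_cases hxj : x = j
        · subst hxj
          refine ⟨?_, ?_, ?_⟩ <;> simp [hi, hxi, hji, hfj, hι]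
        · have hxt : x ∈ t := Finset.mem_erase.2 ⟨hxj, Finset.mem_erase.2 ⟨hxi, hx⟩⟩
          obtain ⟨hm, hfixpt, hf⟩ := hσ' x hxt
          have h1 : σ' x ≠ j := (Finset.mem_erase.1 hm).1
          have h2 : σ' x ≠ i := (Finset.mem_erase.1 (Finset.mem_erase.1 hm).2).1
          have h3 : σ' x ∈ s := (Finset.mem_erase.1 (Finset.mem_erase.1 hm).2).2
          simp only [if_neg hxi, if_neg hxj, if_neg h2, if_neg h1]
          exact ⟨h3, hfixpt, hf⟩

/-- If a transpose involution `X ↦ Φ⁻¹ Xᵗ Φ` (`Φ` invertible symmetric,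
char F ≠ 2, `G` abelian) preserves every component of the elementary `G`-grading of
`M_n(F)` defined by `(g_1, …, g_n)`, then there exist `h ∈ G` and an involutive
permutation `σ` of `{1, …, n}` with `g_i g_{σ(i)} = h` for all `i`. -/
theorem stmt7 (F : Type*) [Field F] (hchar : (2 : F) ≠ 0)
    (G : Type*) [CommGroup G]
    (n : ℕ) (g : Fin n → G)
    (R : G → Submodule F (Matrix (Fin n) (Fin n) F))
    (hR : R = fun a => Submodule.span F
      {x | ∃ i j : Fin n, (g i)⁻¹ * g j = a ∧ x = Matrix.single i j (1 : F)})
    (Φ : Matrix (Fin n) (Fin n) F) (hΦ : IsUnit Φ) (hsymm : Φᵀ = Φ)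
    (hgr : ∀ a : G, ∀ x ∈ R a, Φ⁻¹ * xᵀ * Φ ∈ R a) :
    ∃ (h : G) (σ : Equiv.Perm (Fin n)),
      (∀ i, σ (σ i) = i) ∧ ∀ i, g i * g (σ i) = h := by  classical
  subst hR
  -- every matrix in R a is supported on positions (k,l) with (g k)⁻¹ * g l = a
  have hmem : ∀ (a : G) (M : Matrix (Fin n) (Fin n) F),
      M ∈ Submodule.span F
        {x | ∃ i j : Fin n, (g i)⁻¹ * g j = a ∧ x = Matrix.single i j (1 : F)} →
      ∀ k l, M k l ≠ 0 → (g k)⁻¹ * g l = a := by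
    intro a M hM k l hkl
    by_contra hne
    let P : Submodule F (Matrix (Fin n) (Fin n) F) :=
      { carrier := {M | ∀ k l : Fin n, (g k)⁻¹ * g l ≠ a → M k l = 0}
        add_mem' := fun hx hy k l hh => by
          simp [Matrix.add_apply, hx k l hh, hy k l hh]
        zero_mem' := fun k l _ => rfl
        smul_mem' := fun c x hx k l hh => by
          simp [Matrix.smul_apply, hx k l hh] }
    have hle : Submodule.span F
        {x | ∃ i j : Fin n, (g i)⁻¹ * g j = a ∧ x = Matrix.single i j (1 : F)} ≤ P := by
      rw [Submodule.span_le]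
      rintro x ⟨i, j, hij, rfl⟩ k' l' hkl'
      apply Matrix.single_apply_of_ne
      rintro ⟨rfl, rfl⟩
      exact hkl' hij
    exact hkl (hle hM k l hne)
  -- entry formula for the involution applied to a basis matrix
  have hentry : ∀ (p q u v : Fin n),
      (Φ⁻¹ * (Matrix.single p q (1 : F))ᵀ * Φ) u v = Φ⁻¹ u q * Φ p v := by
    intro p q u v
    have ht : (Matrix.single p q (1 : F))ᵀ = Matrix.single q p 1 := by
      ext a b
      simp [Matrix.transpose_apply, Matrix.single, and_comm]
    rw [ht]
    simp [Matrix.mul_apply, Matrix.single, ite_and, Finset.sum_ite_eq,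
      Finset.mul_sum, Finset.sum_mul]
  -- the key relation
  have hkey : ∀ i l i' l' : Fin n, Φ i l ≠ 0 → Φ i' l' ≠ 0 → g i * g l = g i' * g l' := by
    intro i l i' l' h1 h2
    have hdet : IsUnit Φ.det := (Matrix.isUnit_iff_isUnit_det Φ).1 hΦ
    have hinv : Φ * Φ⁻¹ = 1 := Matrix.mul_nonsing_inv Φ hdet
    have hex : ∃ k, Φ⁻¹ k i' ≠ 0 := by
      by_contra hc
      push_neg at hc
      have h0 : (Φ * Φ⁻¹) i' i' = 0 := by
        rw [Matrix.mul_apply]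
        exact Finset.sum_eq_zero fun m _ => by rw [hc m, mul_zero]
      rw [hinv] at h0
      simp [Matrix.one_apply] at h0
    obtain ⟨k, hk⟩ := hex
    have hx1 : Matrix.single i i' (1 : F) ∈ Submodule.span F
        {x | ∃ a b : Fin n, (g a)⁻¹ * g b = (g i)⁻¹ * g i' ∧
          x = Matrix.single a b (1 : F)} :=
      Submodule.subset_span ⟨i, i', rfl, rfl⟩
    have hy1 := hgr ((g i)⁻¹ * g i') _ hx1
    have c1 : (g k)⁻¹ * g l = (g i)⁻¹ * g i' := by
      refine hmem _ _ hy1 k l ?_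
      rw [hentry]
      exact mul_ne_zero hk h1
    have hx2 : Matrix.single i' i' (1 : F) ∈ Submodule.span F
        {x | ∃ a b : Fin n, (g a)⁻¹ * g b = (g i')⁻¹ * g i' ∧
          x = Matrix.single a b (1 : F)} :=
      Submodule.subset_span ⟨i', i', rfl, rfl⟩
    have hy2 := hgr ((g i')⁻¹ * g i') _ hx2
    have c2 : (g k)⁻¹ * g l' = (g i')⁻¹ * g i' := by
      refine hmem _ _ hy2 k l' ?_
      rw [hentry]
      exact mul_ne_zero hk h2
    have hkl' : g k = g l' := by
      rw [inv_mul_cancel] at c2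
      exact inv_mul_eq_one.mp c2
    rw [hkl'] at c1
    have hgl : g l = g l' * ((g i)⁻¹ * g i') := by
      rw [← c1, mul_inv_cancel_left]
    rw [hgl, mul_left_comm, mul_inv_cancel_left, mul_comm]
  -- a nonzero transversal of Φ
  have hτex : ∃ τ : Equiv.Perm (Fin n), ∀ i, Φ (τ i) i ≠ 0 := by
    by_contra hc
    push_neg at hc
    have hdet0 : Φ.det = 0 := by
      rw [Matrix.det_apply]
      refine Finset.sum_eq_zero fun τ _ => ?_
      obtain ⟨i, hi⟩ := hc τ
      have hp : (∏ x : Fin n, Φ (τ x) x) = 0 :=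
        Finset.prod_eq_zero (Finset.mem_univ i) hi
      rw [hp]
      simp
    have := (Matrix.isUnit_iff_isUnit_det Φ).1 hΦ
    rw [hdet0] at this
    exact this.ne_zero rfl
  obtain ⟨τ, hτ⟩ := hτex
  rcases Nat.eq_zero_or_pos n with rfl | hn
  · exact ⟨1, 1, fun i => i.elim0, fun i => i.elim0⟩
  set i0 : Fin n := ⟨0, hn⟩ with hi0
  set h : G := g (τ i0) * g i0 with hh
  set ι : G → G := fun v => v⁻¹ * h with hιdef
  have hιinv : ∀ v, ι (ι v) = v := by
    intro v
    simp [hιdef, mul_comm, mul_left_comm]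
  have hτg : ∀ i, g (τ i) = ι (g i) := by
    intro i
    have hk := hkey (τ i) i (τ i0) i0 (hτ i) (hτ i0)
    simp only [hιdef, hh]
    rw [← hk]
    simp [mul_comm, mul_left_comm, mul_assoc]
  have hcard : ∀ b : G, (Finset.univ.filter (fun i : Fin n => g i = b)).card
      = (Finset.univ.filter fun i : Fin n => g i = ι b).card := by
    intro b
    refine Finset.card_bij' (fun i _ => τ i) (fun i _ => τ.symm i) ?_ ?_ ?_ ?_
    · intro i hi
      simp only [Finset.mem_filter, Finset.mem_univ, true_and] at hi ⊢
      rw [hτg i, hi]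
    · intro i hi
      simp only [Finset.mem_filter, Finset.mem_univ, true_and] at hi ⊢
      have : g (τ (τ.symm i)) = ι (g (τ.symm i)) := hτg _
      rw [Equiv.apply_symm_apply] at this
      rw [← hιinv (g (τ.symm i)), ← this, hi, hιinv]
    · intro i _
      exact τ.symm_apply_apply i
    · intro i _
      exact τ.apply_symm_apply i
  obtain ⟨σ0, hσ0⟩ := pairlem g ι hιinv Finset.univ hcard
  have hinvol : Function.Involutive σ0 := fun i => (hσ0 i (Finset.mem_univ i)).2.1
  refine ⟨h, Function.Involutive.toPerm σ0 hinvol, fun i => hinvol i, fun i => ?_⟩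
  have hg : g (σ0 i) = ι (g i) := (hσ0 i (Finset.mem_univ i)).2.2
  show g i * g (σ0 i) = h
  rw [hg]
  simp [hιdef, mul_comm, mul_left_comm]
end

section
/- Let F be a field of characteristic different from 2, G an abelian group, and let R = M_n(F) carry the elementary G-grading defined by (g_1, …, g_n) ∈ G^n. Let Φ ∈ M_n(F) be invertible with Φᵗ = −Φ, and suppose the involution X ↦ Φ^{-1} Xᵗ Φ satisfies (R_g)^* ⊆ R_g for every g ∈ G. Then n is even and there exist h ∈ G and a permutation σ of {1, …, n} with σ ∘ σ = id and σ(i) ≠ i for all i, such that g_i g_{σ(i)} = h for all i. -/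
open Matrix Finset


lemma stmt8_pairing {α : Type*} [DecidableEq α] {G : Type*} [CommGroup G] [DecidableEq G]
    (g : α → G) (h : G) (s : Finset α)
    (hcard : ∀ a : G, (s.filter fun i => g i = a).card = (s.filter fun i => g i = h * a⁻¹).card)
    (heven : ∀ a : G, a * a = h → Even (s.filter fun i => g i = a).card) :
    Even s.card ∧ ∃ f : α → α, ∀ i ∈ s, f i ∈ s ∧ f (f i) = i ∧ f i ≠ i ∧ g i * g (f i) = h := by
  induction s using Finset.strongInduction with
  | _ s ih =>
  rcases s.eq_empty_or_nonempty with rfl | ⟨i, hi⟩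
  · exact ⟨by simp, id, by simp⟩
  · have hji : ∃ j ∈ s, j ≠ i ∧ g i * g j = h := by
      by_cases hia : g i * g i = h
      · have he := heven (g i) hia
        have h1 : i ∈ s.filter fun k => g k = g i := by simp [hi]
        have h2 : 1 < (s.filter fun k => g k = g i).card := by
          rcases he with ⟨m, hm⟩
          have h0 : 0 < (s.filter fun k => g k = g i).card := Finset.card_pos.2 ⟨i, h1⟩
          omega
        obtain ⟨x, hx, y, hy, hxy⟩ := Finset.one_lt_card.1 h2
        rcases eq_or_ne x i with rfl | hxi
        · obtain ⟨hy1, hy2⟩ := Finset.mem_filter.1 hy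
          exact ⟨y, hy1, fun hc => hxy hc.symm, by rw [hy2, hia]⟩
        · obtain ⟨hx1, hx2⟩ := Finset.mem_filter.1 hx
          exact ⟨x, hx1, hxi, by rw [hx2, hia]⟩
      · have h1 : 0 < (s.filter fun k => g k = g i).card :=
          Finset.card_pos.2 ⟨i, by simp [hi]⟩
        rw [hcard (g i)] at h1
        obtain ⟨j, hj⟩ := Finset.card_pos.1 h1
        obtain ⟨hj1, hj2⟩ := Finset.mem_filter.1 hj
        have hj2' : g j * g i = h := eq_mul_inv_iff_mul_eq.1 hj2
        refine ⟨j, hj1, ?_, by rw [mul_comm]; exact hj2'⟩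
        rintro rfl
        exact hia hj2'
    obtain ⟨j, hj, hjne, hgij⟩ := hji
    set s' : Finset α := (s.erase i).erase j with hs'
    have hjmem : j ∈ s.erase i := Finset.mem_erase.2 ⟨hjne, hj⟩
    have hs : s = insert i (insert j s') := by
      rw [hs', Finset.insert_erase hjmem, Finset.insert_erase hi]
    have hinotin : i ∉ insert j s' := by
      simp only [Finset.mem_insert]
      rintro (rfl | hmem)
      · exact hjne rfl
      · exact (Finset.mem_erase.1 (Finset.mem_of_mem_erase hmem)).1 rfl
    have hjnotin : j ∉ s' := fun hmem => (Finset.mem_erase.1 hmem).1 rfl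
    have hiffi : ∀ a : G, g i = a ↔ g j = h * a⁻¹ := by
      intro a
      rw [eq_mul_inv_iff_mul_eq]
      constructor
      · rintro rfl; rw [mul_comm]; exact hgij
      · intro hja
        have : g j * a = g j * g i := by rw [hja, mul_comm]; exact hgij.symm
        exact (mul_left_cancel this).symm
    have hiffj : ∀ a : G, g j = a ↔ g i = h * a⁻¹ := by
      intro a
      rw [eq_mul_inv_iff_mul_eq]
      constructor
      · rintro rfl; exact hgij
      · intro hja
        have : g i * a = g i * g j := by rw [hja]; exact hgij.symm
        exact (mul_left_cancel this).symm
    have count : ∀ a : G, (s.filter fun k => g k = a).card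
        = (s'.filter fun k => g k = a).card
          + ((if g i = a then 1 else 0) + (if g j = a then 1 else 0)) := by
      intro a
      conv_lhs => rw [hs]
      rw [Finset.filter_insert, Finset.filter_insert]
      have hjf : j ∉ s'.filter fun k => g k = a :=
        fun hmem => hjnotin (Finset.mem_of_mem_filter _ hmem)
      have hif2 : i ∉ insert j (s'.filter fun k => g k = a) := by
        intro hm
        rcases Finset.mem_insert.1 hm with rfl | hm
        · exact hinotin (Finset.mem_insert_self _ _)
        · exact hinotin (Finset.mem_insert_of_mem (Finset.mem_of_mem_filter _ hm))
      have hif1 : i ∉ s'.filter fun k => g k = a :=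
        fun hmem => hif2 (Finset.mem_insert_of_mem hmem)
      by_cases h1 : g i = a <;> by_cases h2 : g j = a
      · rw [if_pos h1, if_pos h2, Finset.card_insert_of_notMem hif2,
          Finset.card_insert_of_notMem hjf]
        simp [h1, h2]
      · rw [if_pos h1, if_neg h2, Finset.card_insert_of_notMem hif1]
        simp [h1, h2]
      · rw [if_neg h1, if_pos h2, Finset.card_insert_of_notMem hjf]
        simp [h1, h2]
      · rw [if_neg h1, if_neg h2]
        simp [h1, h2]
    have hcard' : ∀ a : G,
        (s'.filter fun k => g k = a).card = (s'.filter fun k => g k = h * a⁻¹).card := by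
      intro a
      have e1 : (if g i = a then 1 else 0) = (if g j = h * a⁻¹ then 1 else 0) := by
        simp only [hiffi a]
      have e2 : (if g j = a then 1 else 0) = (if g i = h * a⁻¹ then 1 else 0) := by
        simp only [hiffj a]
      have c1 := count a
      have c2 := count (h * a⁻¹)
      have c3 := hcard a
      omega
    have heven' : ∀ a : G, a * a = h → Even (s'.filter fun k => g k = a).card := by
      intro a ha
      have hha : h * a⁻¹ = a := by rw [← ha, mul_inv_cancel_right]
      have hd : (if g i = a then 1 else 0) + ((if g j = a then 1 else 0) : ℕ)
          = if g i = a then 2 else 0 := by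
        have e1 : g i = a ↔ g j = a := by rw [hiffi a, hha]
        by_cases h1 : g i = a
        · simp [h1, e1.1 h1]
        · have h2 : ¬ g j = a := fun hc => h1 (e1.2 hc)
          simp [h1, h2]
      have he := heven a ha
      have c1 := count a
      rw [hd] at c1
      rw [Nat.even_iff] at he ⊢
      by_cases h1 : g i = a
      · rw [if_pos h1] at c1; omega
      · rw [if_neg h1] at c1; omega
    have hss : s' ⊂ s :=
      Finset.ssubset_of_subset_of_ssubset (Finset.erase_subset _ _) (Finset.erase_ssubset hi)
    obtain ⟨hev, f', hf'⟩ := ih s' hss hcard' heven'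
    have hscard : s.card = s'.card + 2 := by
      rw [hs, Finset.card_insert_of_notMem hinotin, Finset.card_insert_of_notMem hjnotin]
    constructor
    · rw [hscard]; exact hev.add (Even.add_self 1)
    · set fn := Function.update (Function.update f' i j) j i with hfn
      refine ⟨fn, ?_⟩
      intro x hx
      have hmem' : ∀ y, y ∈ s' → y ≠ i ∧ y ≠ j := by
        intro y hy
        exact ⟨(Finset.mem_erase.1 (Finset.mem_of_mem_erase hy)).1, (Finset.mem_erase.1 hy).1⟩
      have feval : ∀ y, y ∈ s' → fn y = f' y := by
        intro y hy
        obtain ⟨hy1, hy2⟩ := hmem' y hy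
        rw [hfn, Function.update_of_ne hy2, Function.update_of_ne hy1]
      have fi : fn i = j := by
        rw [hfn, Function.update_of_ne (Ne.symm hjne), Function.update_self]
      have fj : fn j = i := by rw [hfn]; exact Function.update_self _ _ _
      rcases eq_or_ne x i with rfl | hxi
      · exact ⟨by rw [fi]; exact hj, by rw [fi, fj], by rw [fi]; exact hjne,
          by rw [fi]; exact hgij⟩
      rcases eq_or_ne x j with rfl | hxj
      · exact ⟨by rw [fj]; exact hi, by rw [fj, fi], by rw [fj]; exact Ne.symm hjne,
          by rw [fj, mul_comm]; exact hgij⟩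
      have hxs' : x ∈ s' := Finset.mem_erase.2 ⟨hxj, Finset.mem_erase.2 ⟨hxi, hx⟩⟩
      obtain ⟨hf1, hf2, hf3, hf4⟩ := hf' x hxs'
      refine ⟨Finset.mem_of_mem_erase (Finset.mem_of_mem_erase ((feval x hxs').symm ▸ hf1)), ?_, ?_, ?_⟩
      · rw [feval x hxs', feval _ hf1, hf2]
      · rw [feval x hxs']; exact hf3
      · rw [feval x hxs']; exact hf4

lemma stmt8_sum_dite_mul {F ι : Type*} [Field F] [Fintype ι] (p : ι → Prop) [DecidablePred p]
    (c : Subtype p → F) (v : ι → F) :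
    ∑ k, (if hk : p k then c ⟨k, hk⟩ else 0) * v k = ∑ i : Subtype p, c i * v i := by
  rw [← Finset.sum_filter_add_sum_filter_not univ p]
  have h2 : ∑ k ∈ univ.filter fun k => ¬ p k,
      (if hk : p k then c ⟨k, hk⟩ else 0) * v k = 0 := by
    apply Finset.sum_eq_zero
    intro k hk
    rw [dif_neg (Finset.mem_filter.1 hk).2, zero_mul]
  rw [h2, add_zero]
  rw [Finset.sum_subtype (p := p) (univ.filter p) (fun x => by simp)
    (fun k => (if hk : p k then c ⟨k, hk⟩ else 0) * v k)]
  apply Finset.sum_congr rfl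
  intro x _
  rw [dif_pos x.2]

lemma stmt8_subindep {F : Type*} [Field F] {n : ℕ} (Φ : Matrix (Fin n) (Fin n) F)
    (hrows : LinearIndependent F (fun i => Φ i)) (p q : Fin n → Prop)
    [DecidablePred p] [DecidablePred q]
    (hsupp : ∀ i l, p i → ¬ q l → Φ i l = 0) :
    LinearIndependent F (fun (i : Subtype p) (l : Subtype q) => Φ i.1 l.1) := by
  rw [Fintype.linearIndependent_iff]
  intro c hc x
  set d : Fin n → F := fun k => if hk : p k then c ⟨k, hk⟩ else 0 with hd
  have hdz : ∑ k, d k • Φ k = 0 := by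
    funext l
    rw [Finset.sum_apply]
    simp only [Pi.smul_apply, smul_eq_mul, Pi.zero_apply]
    by_cases hl : q l
    · rw [hd]
      rw [stmt8_sum_dite_mul p c (fun k => Φ k l)]
      have := congrFun hc ⟨l, hl⟩
      rw [Finset.sum_apply] at this
      simpa using this
    · apply Finset.sum_eq_zero
      intro k _
      by_cases hk : p k
      · rw [hsupp k l hk hl, mul_zero]
      · rw [hd]; simp [hk]
  have hz := Fintype.linearIndependent_iff.1 hrows d hdz x.1
  rw [hd] at hz
  simpa [x.2] using hz

lemma stmt8_card_le {F : Type*} [Field F] {n : ℕ} (Φ : Matrix (Fin n) (Fin n) F)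
    (hrows : LinearIndependent F (fun i => Φ i)) (p q : Fin n → Prop)
    [DecidablePred p] [DecidablePred q]
    (hsupp : ∀ i l, p i → ¬ q l → Φ i l = 0) :
    Fintype.card (Subtype p) ≤ Fintype.card (Subtype q) := by
  have h := (stmt8_subindep Φ hrows p q hsupp).fintype_card_le_finrank
  rwa [Module.finrank_pi] at h

lemma stmt8_even {F : Type*} [Field F] (hchar : (2 : F) ≠ 0) {n : ℕ}
    (Φ : Matrix (Fin n) (Fin n) F) (hΦ : IsUnit Φ) (hskew : Φᵀ = -Φ)
    (p : Fin n → Prop) [DecidablePred p]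
    (hsupp : ∀ i l, p i → ¬ p l → Φ i l = 0) :
    Even (Fintype.card (Subtype p)) := by
  have hrows : LinearIndependent F (fun i => Φ i) :=
    Matrix.linearIndependent_rows_iff_isUnit.2 hΦ
  set Ψ : Matrix (Subtype p) (Subtype p) F := Matrix.of fun i j => Φ i.1 j.1 with hΨ
  have hΨunit : IsUnit Ψ :=
    Matrix.linearIndependent_rows_iff_isUnit.1 (stmt8_subindep Φ hrows p p hsupp)
  have hΨskew : Ψᵀ = -Ψ := by
    ext i j
    simpa [hΨ] using congrFun (congrFun hskew i.1) j.1
  have hdet : Ψ.det ≠ 0 := by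
    intro hz
    have hu := (Matrix.isUnit_iff_isUnit_det Ψ).1 hΨunit
    rw [hz] at hu
    exact not_isUnit_zero hu
  by_contra hodd
  rw [Nat.not_even_iff_odd] at hodd
  have h1 : Ψ.det = -Ψ.det := by
    conv_lhs => rw [← Matrix.det_transpose, hΨskew]
    rw [Matrix.det_neg, Odd.neg_one_pow hodd, neg_one_mul]
  have h2 : (2 : F) * Ψ.det = 0 := by linear_combination h1
  rcases mul_eq_zero.1 h2 with h | h
  · exact hchar h
  · exact hdet h

lemma stmt8_transpose_std {F : Type*} [Field F] {m k : Type*} [DecidableEq m] [DecidableEq k]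
    (i : m) (j : k) :
    (Matrix.single i j (1 : F))ᵀ = Matrix.single j i (1 : F) := by
  ext a b
  simp [Matrix.single, Matrix.transpose_apply, and_comm]

/-- If a symplectic involution `X ↦ Φ⁻¹ Xᵗ Φ` (`Φ` invertible
skew-symmetric, char F ≠ 2, `G` abelian) preserves every component of the elementary
`G`-grading of `M_n(F)` defined by `(g_1, …, g_n)`, then `n` is even and there exist
`h ∈ G` and a fixed-point-free involutive permutation `σ` of `{1, …, n}` with
`g_i g_{σ(i)} = h` for all `i`. -/
theorem stmt8 (F : Type*) [Field F] (hchar : (2 : F) ≠ 0)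
    (G : Type*) [CommGroup G]
    (n : ℕ) (g : Fin n → G)
    (R : G → Submodule F (Matrix (Fin n) (Fin n) F))
    (hR : R = fun a => Submodule.span F
      {x | ∃ i j : Fin n, (g i)⁻¹ * g j = a ∧ x = Matrix.single i j (1 : F)})
    (Φ : Matrix (Fin n) (Fin n) F) (hΦ : IsUnit Φ) (hskew : Φᵀ = -Φ)
    (hgr : ∀ a : G, ∀ x ∈ R a, Φ⁻¹ * xᵀ * Φ ∈ R a) :
    Even n ∧
    ∃ (h : G) (σ : Equiv.Perm (Fin n)),
      (∀ i, σ (σ i) = i) ∧ (∀ i, σ i ≠ i) ∧ ∀ i, g i * g (σ i) = h := by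
  classical
  subst hR
  rcases Nat.eq_zero_or_pos n with hn | hn
  · subst hn
    exact ⟨Even.zero, 1, Equiv.refl _, fun i => i.elim0, fun i => i.elim0, fun i => i.elim0⟩
  have hdet : IsUnit Φ.det := (Matrix.isUnit_iff_isUnit_det Φ).1 hΦ
  have hΦΦ : Φ * Φ⁻¹ = 1 := Matrix.mul_nonsing_inv Φ hdet
  have hrows : LinearIndependent F (fun i => Φ i) :=
    Matrix.linearIndependent_rows_iff_isUnit.2 hΦ
  have hsupp : ∀ a : G, ∀ x ∈ Submodule.span F
      {x | ∃ i j : Fin n, (g i)⁻¹ * g j = a ∧ x = Matrix.single i j (1 : F)},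
      ∀ k l : Fin n, (g k)⁻¹ * g l ≠ a → x k l = 0 := by
    intro a x hx k l hkl
    induction hx using Submodule.span_induction with
    | mem y hy =>
      obtain ⟨i, j, hij, rfl⟩ := hy
      apply Matrix.single_apply_of_ne
      rintro ⟨rfl, rfl⟩
      exact hkl hij
    | zero => simp
    | add y z _ _ hy hz => simp [Matrix.add_apply, hy, hz]
    | smul t y _ hy => simp [Matrix.smul_apply, hy]
  obtain ⟨k₀, j₀, hk0⟩ : ∃ k j : Fin n, Φ⁻¹ k j ≠ 0 := by
    by_contra hno
    push_neg at hno
    have hz : Φ⁻¹ = 0 := by ext k j; exact hno k j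
    rw [hz, mul_zero] at hΦΦ
    have i0 : Fin n := ⟨0, hn⟩
    have h1 := congrFun (congrFun hΦΦ i0) i0
    simp at h1
  set h : G := g j₀ * g k₀ with hh
  have key : ∀ i l : Fin n, Φ i l ≠ 0 → g i * g l = h := by
    intro i l hil
    have hmem : Matrix.single i j₀ (1 : F) ∈ Submodule.span F
        {x | ∃ i' j' : Fin n, (g i')⁻¹ * g j' = (g i)⁻¹ * g j₀ ∧
          x = Matrix.single i' j' (1 : F)} :=
      Submodule.subset_span ⟨i, j₀, rfl, rfl⟩
    have h2 := hgr _ _ hmem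
    by_contra hne
    have hdeg : (g k₀)⁻¹ * g l ≠ (g i)⁻¹ * g j₀ := by
      intro he
      apply hne
      have hl : g l = g k₀ * ((g i)⁻¹ * g j₀) := inv_mul_eq_iff_eq_mul.1 he
      rw [hh, hl]
      simp [mul_comm, mul_left_comm, mul_assoc]
    have h3 := hsupp _ _ h2 k₀ l hdeg
    rw [stmt8_transpose_std] at h3
    have hentry : (Φ⁻¹ * Matrix.single j₀ i (1 : F) * Φ) k₀ l
        = Φ⁻¹ k₀ j₀ * Φ i l := by
      rw [Matrix.mul_assoc, Matrix.mul_apply]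
      rw [Finset.sum_eq_single j₀]
      · rw [Matrix.single_mul_apply_same, one_mul]
      · intro b _ hb
        rw [Matrix.single_mul_apply_of_ne (h := hb), mul_zero]
      · simp
    rw [hentry] at h3
    exact mul_ne_zero hk0 hil h3
  have hcount : ∀ a : G, (univ.filter fun i : Fin n => g i = a).card
      = Fintype.card {i : Fin n // g i = a} := fun a => (Fintype.card_subtype _).symm
  have hle : ∀ a : G, Fintype.card {i : Fin n // g i = a}
      ≤ Fintype.card {l : Fin n // g l = h * a⁻¹} := by
    intro a
    apply stmt8_card_le Φ hrows
    intro i l hi hl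
    by_contra hz
    apply hl
    have hk := key i l hz
    rw [hi] at hk
    rw [eq_mul_inv_iff_mul_eq, mul_comm]
    exact hk
  have hcard : ∀ a : G, (univ.filter fun i : Fin n => g i = a).card
      = (univ.filter fun i : Fin n => g i = h * a⁻¹).card := by
    intro a
    rw [hcount a, hcount (h * a⁻¹)]
    refine le_antisymm (hle a) ?_
    have h2 := hle (h * a⁻¹)
    have he : h * (h * a⁻¹)⁻¹ = a := by
      rw [_root_.mul_inv_rev, inv_inv, mul_comm a, mul_inv_cancel_left]
    rw [he] at h2
    exact h2
  have hevenc : ∀ a : G, a * a = h →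
      Even ((univ.filter fun i : Fin n => g i = a).card) := by
    intro a ha
    rw [hcount a]
    apply stmt8_even hchar Φ hΦ hskew
    intro i l hi hl
    by_contra hz
    apply hl
    have hk := key i l hz
    rw [hi, ← ha] at hk
    exact mul_left_cancel hk
  obtain ⟨hev, f, hf⟩ := stmt8_pairing g h univ hcard hevenc
  have hinv : Function.Involutive f := fun x => (hf x (Finset.mem_univ x)).2.1
  refine ⟨by simpa using hev, h, Function.Involutive.toPerm f hinv, ?_, ?_, ?_⟩
  · intro i; exact hinv i
  · intro i; exact (hf i (Finset.mem_univ i)).2.2.1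
  · intro i; exact (hf i (Finset.mem_univ i)).2.2.2
end

section
/- Let F be a field, G an abelian group, m, l ≥ 0 with m + 2l ≥ 1, c ∈ G, and let g_1, …, g_m, h_1, …, h_l, h'_1, …, h'_l ∈ G satisfy g_i² = c for all 1 ≤ i ≤ m and h_j h'_j = c for all 1 ≤ j ≤ l. Equip R = M_{m+2l}(F) with the elementary G-grading defined by the tuple (g_1, …, g_m, h_1, …, h_l, h'_1, …, h'_l). Let Φ be the block matrix with 3×3 block form [[I_m, 0, 0], [0, 0, I_l], [0, I_l, 0]] and define X^* = Φ^{-1} Xᵗ Φ. Then * is a graded involution: (R_g)^* ⊆ R_g for all g ∈ G. -/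
open Matrix

/-- on `M_{m+2l}(F)` with the elementary `G`-grading defined by the tuple
`(g_1, …, g_m, h_1, …, h_l, h'_1, …, h'_l)` where `g_i² = c` and `h_j h'_j = c`,
the transpose involution `X^* = Φ⁻¹ Xᵗ Φ` with `Φ = [[I_m,0,0],[0,0,I_l],[0,I_l,0]]`
is a graded involution: `(R_a)^* ⊆ R_a` for all `a ∈ G`. -/
theorem stmt12 (F : Type*) [Field F] (G : Type*) [CommGroup G]
    (m l : ℕ) (hml : 1 ≤ m + 2 * l) (c : G)
    (g : Fin m → G) (h h' : Fin l → G)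
    (hg : ∀ i, g i * g i = c) (hh : ∀ j, h j * h' j = c)
    (gg : Fin m ⊕ (Fin l ⊕ Fin l) → G)
    (hgg : gg = Sum.elim g (Sum.elim h h'))
    (R : G → Submodule F
      (Matrix (Fin m ⊕ (Fin l ⊕ Fin l)) (Fin m ⊕ (Fin l ⊕ Fin l)) F))
    (hR : R = fun a => Submodule.span F
      {x | ∃ i j : Fin m ⊕ (Fin l ⊕ Fin l),
        (gg i)⁻¹ * gg j = a ∧ x = Matrix.single i j (1 : F)})
    (Φ : Matrix (Fin m ⊕ (Fin l ⊕ Fin l)) (Fin m ⊕ (Fin l ⊕ Fin l)) F)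
    (hΦ : Φ = Matrix.fromBlocks 1 0 0 (Matrix.fromBlocks 0 1 1 0)) :
    ∀ a : G, ∀ x ∈ R a, Φ⁻¹ * xᵀ * Φ ∈ R a := by
  set σ : (Fin m ⊕ (Fin l ⊕ Fin l)) → (Fin m ⊕ (Fin l ⊕ Fin l)) :=
    Sum.map id (Sum.elim Sum.inr Sum.inl) with hσ
  have hσσ : ∀ x, σ (σ x) = x := by rintro (i | i | i) <;> simp [hσ]
  have hΦ1 : ∀ x y, Φ x y = if x = σ y then (1 : F) else 0 := by
    rintro (i | i | i) (j | j | j) <;>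
      simp [hΦ, hσ, Matrix.one_apply]
  have hΦ2 : ∀ x y, Φ x y = if σ x = y then (1 : F) else 0 := by
    intro x y
    rw [hΦ1]
    congr 1
    simp only [eq_iff_iff]
    constructor
    · rintro rfl; exact hσσ y
    · rintro rfl; exact (hσσ x).symm
  have hσinj : ∀ x y, σ x = σ y ↔ x = y := fun x y =>
    ⟨fun e => by rw [← hσσ x, e, hσσ], fun e => by rw [e]⟩
  have hmulL : ∀ A : Matrix (Fin m ⊕ (Fin l ⊕ Fin l)) (Fin m ⊕ (Fin l ⊕ Fin l)) F,
      Φ * A = fun x y => A (σ x) y := by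
    intro A
    ext x y
    simp [Matrix.mul_apply, hΦ2, ite_mul]
  have hmulR : ∀ A : Matrix (Fin m ⊕ (Fin l ⊕ Fin l)) (Fin m ⊕ (Fin l ⊕ Fin l)) F,
      A * Φ = fun x y => A x (σ y) := by
    intro A
    ext x y
    simp [Matrix.mul_apply, hΦ1, mul_ite]
  have hΦΦ : Φ * Φ = 1 := by
    rw [hmulL]
    ext x y
    rw [hΦ1]
    simp [Matrix.one_apply, hσσ, hσinj]
  have hinv : Φ⁻¹ = Φ := Matrix.inv_eq_right_inv hΦΦ
  have hggσ : ∀ k, gg (σ k) = c * (gg k)⁻¹ := by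
    rintro (k | k | k)
    · simp [hσ, hgg, ← hg k]
    · simp [hσ, hgg, ← hh k]
    · simp [hσ, hgg, ← hh k]
  intro a x hx
  subst hR
  refine Submodule.span_induction ?_ ?_ ?_ ?_ hx
  · rintro x ⟨i, j, hij, rfl⟩
    apply Submodule.subset_span
    refine ⟨σ j, σ i, ?_, ?_⟩
    · rw [hggσ, hggσ, ← hij, _root_.mul_inv_rev, inv_inv, mul_assoc,
        inv_mul_cancel_left, mul_comm]
    · rw [hinv, Matrix.mul_assoc, hmulR]
      erw [hmulL]
      ext x y
      simp only [Matrix.transpose_apply, Matrix.single, Matrix.of_apply]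
      congr 1
      simp only [eq_iff_iff]
      constructor
      · rintro ⟨rfl, rfl⟩; exact ⟨hσσ _, hσσ _⟩
      · rintro ⟨rfl, rfl⟩; exact ⟨(hσσ _).symm, (hσσ _).symm⟩
  · simp
  · intro p q _ _ hp hq
    rw [Matrix.transpose_add, Matrix.mul_add, Matrix.add_mul]
    exact Submodule.add_mem _ hp hq
  · intro r p _ hp
    rw [Matrix.transpose_smul, Matrix.mul_smul, Matrix.smul_mul]
    exact Submodule.smul_mem _ r hp
end

section
/- Let F be a field of characteristic different from 2 and r ≥ 1. For each t = (t_1, …, t_r) ∈ (Z_2 × Z_2)^r, let X_t ∈ M_{2^r}(F) be the Kronecker product X_{t_1} ⊗ ⋯ ⊗ X_{t_r}, where X_{(0,0)} = I, X_{(1,0)} = diag(−1,1), X_{(0,1)} = [[0,1],[1,0]], X_{(1,1)} = [[0,−1],[1,0]]. These 4^r matrices span the one-dimensional components of a fine (Z_2 × Z_2)^r-grading of M_{2^r}(F). If Q ∈ M_{2^r}(F) is invertible and the map X ↦ Q^{-1} Xᵗ Q maps span(X_t) into itself for every t, then Q is a nonzero scalar multiple of X_s for some s ∈ (Z_2 ×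 Z_2)^r; in particular Qᵗ = Q or Qᵗ = −Q, i.e., (Qᵗ)^{-1} Q = ±I. -/
open Matrix

/-- The four Pauli-grading matrices of `M_2(F)`:
`X_{(0,0)} = I`, `X_{(1,0)} = diag(−1,1)`, `X_{(0,1)} = [[0,1],[1,0]]`,
`X_{(1,1)} = [[0,−1],[1,0]]`. -/
noncomputable def pauliMat (F : Type*) [Field F] (t : ZMod 2 × ZMod 2) :
    Matrix (Fin 2) (Fin 2) F :=
  (!![-1, 0; 0, 1] : Matrix (Fin 2) (Fin 2) F) ^ (t.1.val) *
    (!![0, 1; 1, 0] : Matrix (Fin 2) (Fin 2) F) ^ (t.2.val)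

/-- The `r`-fold Kronecker product `X_t = X_{t_1} ⊗ ⋯ ⊗ X_{t_r}` of Pauli matrices,
realized as a matrix indexed by `Fin r → Fin 2` (identifying `M_{2^r}(F)` with
matrices over `(Fin 2)^r`), with entries
`(X_t)_{i j} = ∏_s (X_{t_s})_{i_s j_s}`. -/
noncomputable def pauliKron (F : Type*) [Field F] (r : ℕ)
    (t : Fin r → ZMod 2 × ZMod 2) :
    Matrix (Fin r → Fin 2) (Fin r → Fin 2) F :=
  Matrix.of fun i j => ∏ s : Fin r, pauliMat F (t s) (i s) (j s)

section aux
variable (F : Type*) [Field F]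
noncomputable def zch (a : ZMod 2) : F := (-1 : F) ^ a.val
lemma zval0 : (0 : ZMod 2).val = 0 := by decide
lemma zval1 : (1 : ZMod 2).val = 1 := by decide
lemma z11 : (1 + 1 : ZMod 2) = 0 := by decide
lemma zone : (1 : ZMod 2) ≠ 0 := by decide
lemma zmod2_cases : ∀ a : ZMod 2, a = 0 ∨ a = 1 := by decide
lemma zch_add (a b : ZMod 2) : zch F (a + b) = zch F a * zch F b := by
  rcases zmod2_cases a with h | h <;> rcases zmod2_cases b with h' | h' <;>
    subst h <;> subst h' <;> simp [zch, z11, zval0, zval1]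
lemma zch_zero : zch F 0 = 1 := by simp [zch, zval0]
lemma zch_one : zch F 1 = -1 := by simp [zch, zval1]
lemma zch_sq (a : ZMod 2) : zch F a * zch F a = 1 := by
  rcases zmod2_cases a with h | h <;> subst h <;> simp [zch, zval0, zval1]
lemma pair_cases : ∀ a : ZMod 2 × ZMod 2,
    a = (0,0) ∨ a = (1,0) ∨ a = (0,1) ∨ a = (1,1) := by decide

lemma pm00 : pauliMat F (0,0) = !![1,0;0,1] := by
  simp [pauliMat, zval0, Matrix.one_fin_two]
lemma pm10 : pauliMat F (1,0) = !![-1,0;0,1] := by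
  simp [pauliMat, zval0, zval1, Matrix.one_fin_two, Matrix.mul_fin_two]
lemma pm01 : pauliMat F (0,1) = !![0,1;1,0] := by
  simp [pauliMat, zval0, zval1, Matrix.one_fin_two, Matrix.mul_fin_two]
lemma pm11 : pauliMat F (1,1) = !![0,-1;1,0] := by
  simp [pauliMat, zval0, zval1, Matrix.mul_fin_two]
lemma pm0 : pauliMat F 0 = !![1,0;0,1] := pm00 F
lemma pm1 : pauliMat F 1 = !![0,-1;1,0] := pm11 F

lemma zsum {M : Type*} [AddCommMonoid M] (f : ZMod 2 → M) :
    ∑ a : ZMod 2, f a = f 0 + f 1 := by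
  rw [show (Finset.univ : Finset (ZMod 2)) = {0, 1} from by decide]
  rw [Finset.sum_insert (by decide), Finset.sum_singleton]

lemma psum {M : Type*} [AddCommMonoid M] (f : ZMod 2 × ZMod 2 → M) :
    ∑ a : ZMod 2 × ZMod 2, f a = f (0,0) + f (0,1) + (f (1,0) + f (1,1)) := by
  rw [Fintype.sum_prod_type, zsum (fun a => ∑ b : ZMod 2, f (a, b)), zsum, zsum]

lemma pauliMat_transpose (a : ZMod 2 × ZMod 2) :
    (pauliMat F a)ᵀ = zch F (a.1 * a.2) • pauliMat F a := by
  rcases pair_cases a with h|h|h|h <;> subst h <;> ext i j <;>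
    fin_cases i <;> fin_cases j <;>
    simp [pm00, pm01, pm10, pm11, pm0, pm1, zch, zval0, zval1,
      Matrix.transpose_apply, z11, mul_comm] <;> norm_num

lemma pauliMat_trace (a : ZMod 2 × ZMod 2) :
    (pauliMat F a).trace = if a = 0 then (2 : F) else 0 := by
  rcases pair_cases a with h|h|h|h <;> subst h <;>
    simp [pm00, pm01, pm10, pm11, pm0, pm1, Matrix.trace_fin_two,
      Prod.ext_iff, zone] <;> norm_num

lemma pauliMat_complete (i j k l : Fin 2) :
    ∑ g : ZMod 2 × ZMod 2, zch F (g.1 * g.2) * (pauliMat F g i j * pauliMat F g k l)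
      = if i = l ∧ j = k then 2 else 0 := by
  rw [psum]
  fin_cases i <;> fin_cases j <;> fin_cases k <;> fin_cases l <;>
    simp [pm00, pm01, pm10, pm11, pm0, pm1, zch, zval0, zval1] <;> norm_num

lemma one_fin2 : (1 : Matrix (Fin 2) (Fin 2) F) = !![1,0;0,1] := by
  simp [Matrix.one_fin_two]
lemma negone_fin2 : (-1 : Matrix (Fin 2) (Fin 2) F) = !![-1,0;0,-1] := by
  ext i j; fin_cases i <;> fin_cases j <;> simp [Matrix.one_apply]

lemma pauliMat_mul (a b : ZMod 2 × ZMod 2) :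
    pauliMat F a * pauliMat F b = zch F (a.2 * b.1) • pauliMat F (a + b) := by
  obtain ⟨a1, a2⟩ := a; obtain ⟨b1, b2⟩ := b
  rcases zmod2_cases a1 with h|h <;> subst h <;>
  rcases zmod2_cases a2 with h|h <;> subst h <;>
  rcases zmod2_cases b1 with h|h <;> subst h <;>
  rcases zmod2_cases b2 with h|h <;> subst h <;>
    simp only [pauliMat, zch, Prod.mk_add_mk, Prod.fst, Prod.snd, zval0, zval1,
      z11, zero_add, add_zero, mul_zero, zero_mul, mul_one, one_mul, pow_zero, pow_one,
      Matrix.mul_fin_two, Matrix.one_mul, Matrix.mul_one, Matrix.smul_of,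
      Matrix.smul_cons, Matrix.smul_empty, smul_eq_mul, one_smul] <;>
    norm_num [← one_fin2 (F := F), ← negone_fin2 (F := F)]
end aux

section kron
variable (F : Type*) [Field F] (r : ℕ)

lemma prod_ite_eq_pow {P : Fin r → Prop} [DecidablePred P] :
    (∏ s : Fin r, if P s then (2 : F) else 0) =
      if ∀ s, P s then (2 : F) ^ r else 0 := by
  by_cases h : ∀ s, P s
  · rw [if_pos h]
    rw [Finset.prod_congr rfl (fun s _ => if_pos (h s)), Finset.prod_const]
    simp
  · rw [if_neg h]
    push_neg at h
    obtain ⟨s, hs⟩ := h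
    exact Finset.prod_eq_zero (Finset.mem_univ s) (if_neg hs)

lemma pauliKron_zero : pauliKron F r 0 = 1 := by
  ext i j
  have key : ∀ a b : Fin 2, pauliMat F 0 a b = if a = b then (1:F) else 0 := by
    intro a b; fin_cases a <;> fin_cases b <;> simp [pm0]
  show (∏ s : Fin r, pauliMat F ((0 : Fin r → ZMod 2 × ZMod 2) s) (i s) (j s))
      = (1 : Matrix (Fin r → Fin 2) (Fin r → Fin 2) F) i j
  rw [Matrix.one_apply]
  simp only [Pi.zero_apply]
  rw [Finset.prod_congr rfl (fun s _ => key (i s) (j s))]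
  by_cases h : i = j
  · subst h; simp
  · rw [if_neg h]
    obtain ⟨s, hs⟩ : ∃ s, i s ≠ j s := by
      by_contra hc; push_neg at hc; exact h (funext hc)
    exact Finset.prod_eq_zero (Finset.mem_univ s) (if_neg hs)

lemma pauliKron_mul (t u : Fin r → ZMod 2 × ZMod 2) :
    pauliKron F r t * pauliKron F r u =
      (∏ s : Fin r, zch F ((t s).2 * (u s).1)) • pauliKron F r (t + u) := by
  ext i j
  simp only [pauliKron, Matrix.mul_apply, Matrix.of_apply, Matrix.smul_apply,
    smul_eq_mul, ← Finset.prod_mul_distrib]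
  rw [← Fintype.piFinset_univ,
    ← Finset.prod_univ_sum (fun _ => (Finset.univ : Finset (Fin 2)))
      (fun s x => pauliMat F (t s) (i s) x * pauliMat F (u s) x (j s))]
  refine Finset.prod_congr rfl fun s _ => ?_
  rw [show (∑ x : Fin 2, pauliMat F (t s) (i s) x * pauliMat F (u s) x (j s))
      = (pauliMat F (t s) * pauliMat F (u s)) (i s) (j s) from
    (Matrix.mul_apply).symm]
  rw [pauliMat_mul]
  simp [Pi.add_apply]

end kron

section kron2
variable (F : Type*) [Field F] (r : ℕ)

lemma pauliKron_transpose (t : Fin r → ZMod 2 × ZMod 2) :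
    (pauliKron F r t)ᵀ =
      (∏ s : Fin r, zch F ((t s).1 * (t s).2)) • pauliKron F r t := by
  ext i j
  show (∏ s : Fin r, pauliMat F (t s) (j s) (i s)) = _
  have key : ∀ s : Fin r, pauliMat F (t s) (j s) (i s)
      = zch F ((t s).1 * (t s).2) * pauliMat F (t s) (i s) (j s) := by
    intro s
    have := congrArg (fun M => M (i s) (j s)) (pauliMat_transpose F (t s))
    simpa [Matrix.transpose_apply] using this
  rw [Finset.prod_congr rfl (fun s _ => key s), Finset.prod_mul_distrib]
  rfl

lemma pauliKron_trace (t : Fin r → ZMod 2 × ZMod 2) :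
    (pauliKron F r t).trace = if t = 0 then (2 : F) ^ r else 0 := by
  unfold Matrix.trace
  show (∑ i : Fin r → Fin 2, ∏ s : Fin r, pauliMat F (t s) (i s) (i s)) = _
  rw [← Fintype.piFinset_univ,
    ← Finset.prod_univ_sum (fun _ => (Finset.univ : Finset (Fin 2)))
      (fun s x => pauliMat F (t s) x x)]
  have key : ∀ s : Fin r, (∑ x : Fin 2, pauliMat F (t s) x x)
      = if t s = 0 then (2 : F) else 0 := by
    intro s
    have h := pauliMat_trace F (t s)
    rw [Matrix.trace] at h
    simpa [Fin.sum_univ_two, Matrix.diag] using h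
  rw [Finset.prod_congr rfl (fun s _ => key s), prod_ite_eq_pow]
  congr 1
  simp [funext_iff]

lemma pauliKron_complete (i j k l : Fin r → Fin 2) :
    ∑ u : Fin r → ZMod 2 × ZMod 2,
      (∏ s : Fin r, zch F ((u s).1 * (u s).2)) *
        (pauliKron F r u i j * pauliKron F r u k l)
      = if i = l ∧ j = k then (2 : F) ^ r else 0 := by
  have step1 : ∀ u : Fin r → ZMod 2 × ZMod 2,
      (∏ s : Fin r, zch F ((u s).1 * (u s).2)) *
        (pauliKron F r u i j * pauliKron F r u k l)
      = ∏ s : Fin r, (zch F ((u s).1 * (u s).2) *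
          (pauliMat F (u s) (i s) (j s) * pauliMat F (u s) (k s) (l s))) := by
    intro u
    rw [Finset.prod_mul_distrib, Finset.prod_mul_distrib]
    rfl
  rw [Finset.sum_congr rfl (fun u _ => step1 u)]
  rw [← Fintype.piFinset_univ,
    ← Finset.prod_univ_sum (fun _ => (Finset.univ : Finset (ZMod 2 × ZMod 2)))
      (fun s g => zch F (g.1 * g.2) *
        (pauliMat F g (i s) (j s) * pauliMat F g (k s) (l s)))]
  rw [Finset.prod_congr rfl (fun s _ => pauliMat_complete F (i s) (j s) (k s) (l s))]
  rw [prod_ite_eq_pow]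
  congr 1
  simp only [funext_iff, eq_iff_iff]
  constructor
  · intro h; exact ⟨fun s => (h s).1, fun s => (h s).2⟩
  · rintro ⟨h1, h2⟩ s; exact ⟨h1 s, h2 s⟩

/-- Expansion of any matrix in the Pauli basis. -/
lemma pauliKron_expand (hchar : (2 : F) ≠ 0)
    (Q : Matrix (Fin r → Fin 2) (Fin r → Fin 2) F) :
    Q = ((2 : F) ^ r)⁻¹ • ∑ u : Fin r → ZMod 2 × ZMod 2,
      ((∏ s : Fin r, zch F ((u s).1 * (u s).2)) *
        (Q * pauliKron F r u).trace) • pauliKron F r u := by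
  have h2r : (2 : F) ^ r ≠ 0 := pow_ne_zero _ hchar
  ext i j
  rw [Matrix.smul_apply, Matrix.sum_apply]
  have tr : ∀ u, (Q * pauliKron F r u).trace
      = ∑ k' : Fin r → Fin 2, ∑ l' : Fin r → Fin 2,
          Q k' l' * pauliKron F r u l' k' := by
    intro u
    rw [Matrix.trace]
    simp only [Matrix.diag, Matrix.mul_apply]
  have hsum : (∑ u : Fin r → ZMod 2 × ZMod 2,
      (((∏ s : Fin r, zch F ((u s).1 * (u s).2)) *
        (Q * pauliKron F r u).trace) • pauliKron F r u) i j)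
      = Q i j * (2:F)^r := by
    calc (∑ u : Fin r → ZMod 2 × ZMod 2,
          (((∏ s : Fin r, zch F ((u s).1 * (u s).2)) *
            (Q * pauliKron F r u).trace) • pauliKron F r u) i j)
        = ∑ u : Fin r → ZMod 2 × ZMod 2, ∑ k' : Fin r → Fin 2, ∑ l' : Fin r → Fin 2,
            Q k' l' * ((∏ s : Fin r, zch F ((u s).1 * (u s).2)) *
              (pauliKron F r u i j * pauliKron F r u l' k')) := by
          refine Finset.sum_congr rfl fun u _ => ?_
          rw [Matrix.smul_apply, smul_eq_mul, tr u]
          simp only [Finset.mul_sum, Finset.sum_mul]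
          exact Finset.sum_congr rfl fun k' _ =>
            Finset.sum_congr rfl fun l' _ => by ring
      _ = ∑ k' : Fin r → Fin 2, ∑ l' : Fin r → Fin 2, Q k' l' *
            (∑ u : Fin r → ZMod 2 × ZMod 2,
              (∏ s : Fin r, zch F ((u s).1 * (u s).2)) *
                (pauliKron F r u i j * pauliKron F r u l' k')) := by
          rw [Finset.sum_comm]
          refine Finset.sum_congr rfl fun k' _ => ?_
          rw [Finset.sum_comm]
          refine Finset.sum_congr rfl fun l' _ => ?_
          rw [Finset.mul_sum]
      _ = ∑ k' : Fin r → Fin 2, ∑ l' : Fin r → Fin 2, Q k' l' *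
            (if i = k' ∧ j = l' then (2:F)^r else 0) := by
          refine Finset.sum_congr rfl fun k' _ => Finset.sum_congr rfl fun l' _ => ?_
          rw [pauliKron_complete]
      _ = Q i j * (2:F)^r := by
          rw [Finset.sum_eq_single i]
          · rw [Finset.sum_eq_single j]
            · simp
            · intro b _ hb
              rw [if_neg (fun h : i = i ∧ j = b => hb h.2.symm), mul_zero]
            · intro h; exact absurd (Finset.mem_univ j) h
          · intro b _ hb
            rw [Finset.sum_eq_zero]
            intro l' _
            have : ¬ (i = b ∧ j = l') := fun h => hb h.1.symm
            rw [if_neg this, mul_zero]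
          · intro h; exact absurd (Finset.mem_univ i) h
  rw [hsum, smul_eq_mul]
  field_simp
end kron2

section main
variable (F : Type*) [Field F]

/-- pairing character -/
noncomputable def pch (g v : ZMod 2 × ZMod 2) : F :=
  zch F (g.2 * v.1) * zch F (v.2 * g.1)

lemma pch_sq (g v : ZMod 2 × ZMod 2) : pch F g v * pch F g v = 1 := by
  unfold pch
  rw [show ∀ a b : F, a * b * (a * b) = (a * a) * (b * b) from fun a b => by ring,
    zch_sq, zch_sq, one_mul]

lemma pch_add (g v v' : ZMod 2 × ZMod 2) :
    pch F g (v + v') = pch F g v * pch F g v' := by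
  unfold pch
  rw [Prod.fst_add, Prod.snd_add, mul_add, add_mul, zch_add, zch_add]
  ring

lemma pch_zero (g : ZMod 2 × ZMod 2) : pch F g 0 = 1 := by
  unfold pch
  simp [zch_zero]

lemma pch_zero_left (v : ZMod 2 × ZMod 2) : pch F 0 v = 1 := by
  unfold pch
  simp [zch_zero]

lemma pch_nondeg (w : ZMod 2 × ZMod 2) (hw : w ≠ 0) :
    ∃ g, pch F g w = -1 := by
  rcases pair_cases w with h|h|h|h <;> subst h
  · exact absurd (by decide : ((0,0) : ZMod 2 × ZMod 2) = 0) hw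
  · exact ⟨(0,1), by unfold pch; rw [show ((0,1):ZMod 2 × ZMod 2).2 * ((1,0):ZMod 2 × ZMod 2).1 = 1 from by decide, show ((1,0):ZMod 2 × ZMod 2).2 * ((0,1):ZMod 2 × ZMod 2).1 = 0 from by decide, zch_one, zch_zero, mul_one]⟩
  · exact ⟨(1,0), by unfold pch; rw [show ((1,0):ZMod 2 × ZMod 2).2 * ((0,1):ZMod 2 × ZMod 2).1 = 0 from by decide, show ((0,1):ZMod 2 × ZMod 2).2 * ((1,0):ZMod 2 × ZMod 2).1 = 1 from by decide, zch_one, zch_zero, one_mul]⟩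
  · exact ⟨(1,0), by unfold pch; rw [show ((1,0):ZMod 2 × ZMod 2).2 * ((1,1):ZMod 2 × ZMod 2).1 = 0 from by decide, show ((1,1):ZMod 2 × ZMod 2).2 * ((1,0):ZMod 2 × ZMod 2).1 = 1 from by decide, zch_one, zch_zero, one_mul]⟩

lemma pair_add_self (v : ZMod 2 × ZMod 2) : v + v = 0 := by
  revert v; decide

lemma pair_add_eq_zero : ∀ v v' : ZMod 2 × ZMod 2, v + v' = 0 → v = v' := by
  decide

end main

/-- If `Q ∈ M_{2^r}(F)` is invertible (char F ≠ 2, r ≥ 1) and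
`X ↦ Q⁻¹ Xᵗ Q` maps each one-dimensional component `span(X_t)` of the fine
`(Z_2 × Z_2)^r`-grading of `M_{2^r}(F)` into itself, then `Q` is a nonzero scalar
multiple of some `X_s`; in particular `Qᵗ = Q` or `Qᵗ = −Q`, i.e. `(Qᵗ)⁻¹ Q = ±I`. -/
theorem stmt16 (F : Type*) [Field F] (hchar : (2 : F) ≠ 0)
    (r : ℕ) (hr : 1 ≤ r)
    (Q : Matrix (Fin r → Fin 2) (Fin r → Fin 2) F) (hQ : IsUnit Q)
    (hgr : ∀ t : Fin r → ZMod 2 × ZMod 2,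
      ∀ x ∈ Submodule.span F {pauliKron F r t},
        Q⁻¹ * xᵀ * Q ∈ Submodule.span F {pauliKron F r t}) :
    (∃ (s : Fin r → ZMod 2 × ZMod 2) (c : F), c ≠ 0 ∧ Q = c • pauliKron F r s) ∧
    (Qᵀ = Q ∨ Qᵀ = -Q) ∧ ((Qᵀ)⁻¹ * Q = 1 ∨ (Qᵀ)⁻¹ * Q = -1) := by
  classical
  set X : (Fin r → ZMod 2 × ZMod 2) → Matrix (Fin r → Fin 2) (Fin r → Fin 2) F :=
    fun u => pauliKron F r u with hX
  set ε : (Fin r → ZMod 2 × ZMod 2) → F :=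
    fun u => ∏ s : Fin r, zch F ((u s).1 * (u s).2) with hε
  set σ : (Fin r → ZMod 2 × ZMod 2) → (Fin r → ZMod 2 × ZMod 2) → F :=
    fun t u => ∏ s : Fin r, zch F ((t s).2 * (u s).1) with hσ
  set τ : (Fin r → ZMod 2 × ZMod 2) → F :=
    fun u => (Q * X u).trace with hτ
  have hQdet : IsUnit Q.det := (Matrix.isUnit_iff_isUnit_det Q).mp hQ
  have hQl : Q⁻¹ * Q = 1 := Matrix.nonsing_inv_mul Q hQdet
  have hQr : Q * Q⁻¹ = 1 := Matrix.mul_nonsing_inv Q hQdet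
  have h2r : (2 : F) ^ r ≠ 0 := pow_ne_zero _ hchar
  -- ε squares to one
  have heps_sq : ∀ u, ε u * ε u = 1 := by
    intro u
    rw [hε, ← Finset.prod_mul_distrib]
    exact Finset.prod_eq_one fun s _ => zch_sq F _
  -- multiplication rule
  have hmul : ∀ t u, X t * X u = σ t u • X (t + u) :=
    fun t u => pauliKron_mul F r t u
  -- X t * X t = ε t • 1
  have hsq : ∀ t, X t * X t = ε t • 1 := by
    intro t
    rw [hmul t t]
    have h1 : t + t = 0 := funext fun s => pair_add_self (t s)
    have h2 : σ t t = ε t := by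
      rw [hσ, hε]
      exact Finset.prod_congr rfl fun s _ => by rw [mul_comm]
    rw [h1, h2]
    congr 1
    exact pauliKron_zero F r
  -- step A
  have hdex : ∀ t, ∃ dt : F, X t * Q = dt • (Q * X t) := by
    intro t
    have hmem := hgr t (X t) (Submodule.mem_span_singleton_self _)
    rw [Submodule.mem_span_singleton] at hmem
    obtain ⟨c, hc⟩ := hmem
    have htr : (X t)ᵀ = ε t • X t := pauliKron_transpose F r t
    rw [htr] at hc
    refine ⟨ε t * c, ?_⟩
    have h1 : Q⁻¹ * (ε t • X t) * Q = ε t • (Q⁻¹ * X t * Q) := by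
      rw [Matrix.mul_smul, Matrix.smul_mul]
    rw [h1] at hc
    have h2 : Q⁻¹ * X t * Q = (ε t * c) • X t := by
      have h := congrArg (fun M => ε t • M) hc
      simp only [smul_smul, heps_sq t, one_smul] at h
      exact h.symm
    have h3 := congrArg (fun M => Q * M) h2
    calc X t * Q = Q * (Q⁻¹ * X t * Q) := by
          rw [show Q * (Q⁻¹ * X t * Q) = (Q * Q⁻¹) * X t * Q from by
            noncomm_ring, hQr, Matrix.one_mul]
      _ = Q * ((ε t * c) • X t) := by rw [h2]
      _ = (ε t * c) • (Q * X t) := by rw [Matrix.mul_smul]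
  choose d hd using hdex
  -- step B
  have key : ∀ t u, (σ t u * σ u t) * τ u = d t * τ u := by
    intro t u
    have w1 : (X t * Q) * (X t * X u) = (d t * ε t) • (Q * X u) := by
      rw [hd t]
      rw [Matrix.smul_mul, show Q * X t * (X t * X u) = Q * ((X t * X t) * X u) from by
        noncomm_ring, hsq t, Matrix.smul_mul, Matrix.one_mul, Matrix.mul_smul, smul_smul]
    have w2 : ((X t * Q) * (X t * X u)).trace = (σ t u * (ε t * σ u t)) * τ u := by
      rw [Matrix.trace_mul_comm]
      have e1 : (X t * X u) * (X t * Q) = ((σ t u * (ε t * σ u t)) • X u) * Q := by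
        rw [hmul t u, Matrix.smul_mul]
        congr 1
        rw [show X (t + u) * (X t * Q) = (X (t + u) * X t) * Q from by noncomm_ring]
        rw [hmul (t + u) t]
        have h1 : t + u + t = u := by
          funext s
          have : t s + u s + t s = u s := by
            have := pair_add_self (t s); 
            calc t s + u s + t s = t s + t s + u s := by ring
              _ = u s := by rw [this, zero_add]
          exact this
        have h2 : σ (t + u) t = ε t * σ u t := by
          rw [hσ, hε, ← Finset.prod_mul_distrib]
          refine Finset.prod_congr rfl fun s _ => ?_
          have : ((t + u) s).2 * (t s).1 = (t s).2 * (t s).1 + (u s).2 * (t s).1 := by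
            simp [Pi.add_apply, Prod.snd_add, add_mul]
          rw [this, zch_add, mul_comm ((t s).1) ((t s).2)]
        rw [h1, h2, Matrix.smul_mul, Matrix.smul_mul, smul_smul]
      rw [e1, Matrix.smul_mul, Matrix.trace_smul, Matrix.trace_mul_comm, hτ]
      simp [smul_eq_mul]
    have w3 : ((X t * Q) * (X t * X u)).trace = (d t * ε t) * τ u := by
      rw [w1, Matrix.trace_smul, hτ]
      simp [smul_eq_mul]
    have w4 : (σ t u * (ε t * σ u t)) * τ u = (d t * ε t) * τ u := by rw [← w2, w3]
    linear_combination (ε t) * w4 + (d t * τ u - σ t u * σ u t * τ u) * heps_sq t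
  -- Q ≠ 0
  have hQne : Q ≠ 0 := by
    intro h0
    have h1 : (1 : Matrix (Fin r → Fin 2) (Fin r → Fin 2) F) = 0 := by
      rw [← hQr, h0, Matrix.zero_mul]
    have h2 := congrFun (congrFun h1 (fun _ => 0)) (fun _ => 0)
    rw [Matrix.one_apply_eq] at h2
    exact one_ne_zero h2
  have hexp := pauliKron_expand F r hchar Q
  have hex : ∃ u₀, τ u₀ ≠ 0 := by
    by_contra hcon
    push_neg at hcon
    refine hQne ?_
    rw [hexp, Finset.sum_eq_zero (fun u _ => ?_), smul_zero]
    rw [show (Q * pauliKron F r u).trace = τ u from rfl, hcon u, mul_zero, zero_smul]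
  obtain ⟨u₀, hu₀⟩ := hex
  have hbeta : ∀ u, τ u ≠ 0 → ∀ t, σ t u * σ u t = d t := by
    intro u hu t
    exact mul_right_cancel₀ hu (key t u)
  have hsupp : ∀ u, u ≠ u₀ → τ u = 0 := by
    intro u hne
    by_contra hu
    obtain ⟨s, hs⟩ : ∃ s, u s ≠ u₀ s := by
      by_contra hcc; push_neg at hcc; exact hne (funext hcc)
    have hg : ∀ g : ZMod 2 × ZMod 2, pch F g (u s) = pch F g (u₀ s) := by
      intro g
      set t : Fin r → ZMod 2 × ZMod 2 := Pi.single s g with ht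
      have e1 : ∀ v : Fin r → ZMod 2 × ZMod 2, σ t v * σ v t = pch F g (v s) := by
        intro v
        simp only [hσ]
        rw [← Finset.prod_mul_distrib]
        rw [Finset.prod_eq_single s]
        · rw [ht, Pi.single_eq_same]; rfl
        · intro b _ hb
          rw [ht, Pi.single_eq_of_ne hb]
          rw [show ((0:ZMod 2 × ZMod 2)).2 = 0 from rfl,
            show ((0:ZMod 2 × ZMod 2)).1 = 0 from rfl, zero_mul, mul_zero,
            zch_zero, mul_one]
        · intro hns; exact absurd (Finset.mem_univ s) hns
      have r1 := hbeta u hu t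
      have r2 := hbeta u₀ hu₀ t
      rw [e1 u] at r1; rw [e1 u₀] at r2
      rw [r1, r2]
    have hw : u s + u₀ s ≠ 0 := fun h => hs (pair_add_eq_zero _ _ h)
    obtain ⟨g, hgneg⟩ := pch_nondeg F (u s + u₀ s) hw
    rw [pch_add, hg g, pch_sq] at hgneg
    exact hchar (by linear_combination hgneg)
  set c : F := ((2:F)^r)⁻¹ * (ε u₀ * τ u₀) with hcdef
  have hcol : (∑ u : Fin r → ZMod 2 × ZMod 2,
      ((∏ s : Fin r, zch F ((u s).1 * (u s).2)) *
        (Q * pauliKron F r u).trace) • pauliKron F r u)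
      = ((∏ s : Fin r, zch F ((u₀ s).1 * (u₀ s).2)) *
        (Q * pauliKron F r u₀).trace) • pauliKron F r u₀ := by
    refine Finset.sum_eq_single u₀ (fun b _ hb => ?_)
      (fun h => absurd (Finset.mem_univ u₀) h)
    rw [show (Q * pauliKron F r b).trace = τ b from rfl, hsupp b hb,
      mul_zero, zero_smul]
  have hQc : Q = c • X u₀ := by
    rw [hexp, hcol, smul_smul]
  have heps_ne : ε u₀ ≠ 0 := by
    intro h
    have h' := heps_sq u₀
    rw [h, mul_zero] at h'
    exact zero_ne_one h'
  have hcne : c ≠ 0 :=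
    mul_ne_zero (inv_ne_zero h2r) (mul_ne_zero heps_ne hu₀)
  have hXt : (X u₀)ᵀ = ε u₀ • X u₀ := pauliKron_transpose F r u₀
  have hQt : Qᵀ = ε u₀ • Q := by
    rw [hQc, Matrix.transpose_smul, hXt, smul_smul, smul_smul, mul_comm]
  have heps1 : ε u₀ = 1 ∨ ε u₀ = -1 := mul_self_eq_one_iff.mp (heps_sq u₀)
  refine ⟨⟨u₀, c, hcne, hQc⟩, ?_, ?_⟩
  · rcases heps1 with h | h
    · left; rw [hQt, h, one_smul]
    · right; rw [hQt, h, neg_one_smul]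
  · rcases heps1 with h | h
    · left
      have hT : Qᵀ = Q := by rw [hQt, h, one_smul]
      rw [hT, hQl]
    · right
      have hT : Qᵀ = -Q := by rw [hQt, h, neg_one_smul]
      have hli : (-(Q⁻¹)) * (-Q) = 1 := by rw [neg_mul_neg, hQl]
      have hinv : (Qᵀ)⁻¹ = -(Q⁻¹) := by
        rw [hT]; exact Matrix.inv_eq_left_inv hli
      rw [hinv, hT] at *
      rw [Matrix.neg_mul, hQl]
end

section
/- Let F be a field, G a group, n ≥ 1, and suppose R = M_n(F) = ⊕_{g∈G} R_g is a G-grading (R_g R_h ⊆ R_{gh}) which is fine, i.e., dim R_g ≤ 1 for all g ∈ G. Then every nonzero homogeneous element of R is invertible, and the support Supp R = {g ∈ G : R_g ≠ 0} is a subgroup of G; moreover, if x ∈ R_g is nonzero then x^{-1} ∈ R_{g^{-1}}. -/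
open Matrix

section Aux

variable {F : Type*} [Field F]

/-- In a space of dimension at most 1, every vector is a multiple of any nonzero vector. -/
lemma aux_finrank_le_one_span {M : Type*} [AddCommGroup M] [Module F M]
    [FiniteDimensional F M] (N : Submodule F M) (hN : Module.finrank F N ≤ 1)
    {w v : M} (hw : w ∈ N) (hv : v ∈ N) (hw0 : w ≠ 0) : ∃ c : F, v = c • w := by
  set w' : N := ⟨w, hw⟩ with hw'
  have hw'0 : w' ≠ 0 := fun h => hw0 (by simpa [hw'] using congrArg (Subtype.val) h)
  have h1 : Module.finrank F (Submodule.span F {w'}) = 1 :=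
    finrank_span_singleton hw'0
  have h2 : Submodule.span F {w'} = ⊤ := by
    apply Submodule.eq_top_of_finrank_eq
    refine le_antisymm (Submodule.finrank_le _) ?_
    rw [h1]; exact hN
  have hv' : (⟨v, hv⟩ : N) ∈ Submodule.span F {w'} := h2 ▸ Submodule.mem_top
  obtain ⟨c, hc⟩ := Submodule.mem_span_singleton.mp hv'
  exact ⟨c, by simpa [hw'] using (congrArg Subtype.val hc).symm⟩

lemma aux_basis_mul {n : ℕ} (x : Matrix (Fin n) (Fin n) F) (i k l j : Fin n) :
    Matrix.single i k (1 : F) * x * Matrix.single l j 1 = Matrix.single i j (x k l) := by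
  ext p q
  by_cases hq : q = j
  · subst hq
    by_cases hp : p = i
    · subst hp; simp
    · simp [hp, Ne.symm hp]
  · simp [hq, Ne.symm hq]

lemma aux_one_eq_sum {n : ℕ} :
    (1 : Matrix (Fin n) (Fin n) F) = ∑ i : Fin n, Matrix.single i i (1 : F) := by
  ext p q
  rw [Matrix.sum_apply]
  simp only [Matrix.single, Matrix.of_apply, Matrix.one_apply]
  by_cases h : p = q
  · subst h
    rw [Finset.sum_eq_single p]
    · simp
    · intro b _ hb; exact if_neg (fun hc => hb hc.1)
    · intro hp; exact absurd (Finset.mem_univ p) hp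
  · rw [Finset.sum_eq_zero, if_neg h]
    intro i _
    exact if_neg (fun hc => h (hc.1.symm.trans hc.2))

end Aux

/-- In a fine `G`-grading `M_n(F) = ⊕_g R_g` (each `dim R_g ≤ 1`,
`n ≥ 1`), every nonzero homogeneous element is invertible with `x⁻¹ ∈ R_{g⁻¹}` for
`x ∈ R_g`, and the support `{g : R_g ≠ 0}` is a subgroup of `G`. -/
theorem stmt17 (F : Type*) [Field F] (G : Type*) [Group G] [DecidableEq G]
    (n : ℕ) (hn : 1 ≤ n)
    (R : G → Submodule F (Matrix (Fin n) (Fin n) F))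
    (hinternal : DirectSum.IsInternal R)
    (hmul : ∀ a b : G, R a * R b ≤ R (a * b))
    (hfine : ∀ a : G, Module.finrank F (R a) ≤ 1) :
    (∀ a : G, ∀ x ∈ R a, x ≠ 0 → IsUnit x ∧ x⁻¹ ∈ R a⁻¹) ∧
    ∃ H : Subgroup G, ∀ a : G, a ∈ H ↔ R a ≠ ⊥ := by
  classical
  haveI : Nonempty (Fin n) := ⟨⟨0, hn⟩⟩
  set M := Matrix (Fin n) (Fin n) F with hM
  letI : DirectSum.Decomposition R := hinternal.chooseDecomposition
  have hmul' : ∀ {a b : G} {x y : M}, x ∈ R a → y ∈ R b → x * y ∈ R (a * b) :=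
    fun hx hy => hmul _ _ (Submodule.mul_mem_mul hx hy)
  have htop : (⨆ g, R g) = ⊤ := hinternal.submodule_iSup_eq_top
  have h10 : (1 : M) ≠ 0 := one_ne_zero
  -- the degree-one component of 1
  set u : M := (DirectSum.decompose R (1 : M) (1 : G) : M) with hu
  have humem : u ∈ R 1 := SetLike.coe_mem _
  -- every homogeneous element is fixed by right multiplication by u
  have hhom : ∀ (b : G) (z : M), z ∈ R b → z * u = z := by
    intro b z hz
    set c : G → M := fun g => (DirectSum.decompose R (1 : M) g : M) with hc
    have hcm : ∀ g, c g ∈ R g := fun g => SetLike.coe_mem _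
    set s : Finset G := (DirectSum.decompose R (1 : M)).support with hs
    have h1 : ∑ g ∈ s, c g = 1 := DirectSum.sum_support_decompose R (1 : M)
    have hz1 : z = ∑ g ∈ s, z * c g := by rw [← Finset.mul_sum, h1, mul_one]
    have h2 : z = ∑ g ∈ s, (DirectSum.decompose R (z * c g) b : M) := by
      conv_lhs => rw [← DirectSum.decompose_of_mem_same R hz, hz1]
      rw [DirectSum.decompose_sum]
      rw [DFinsupp.finset_sum_apply]
      push_cast
      rfl
    have h4 : ∑ g ∈ s, (DirectSum.decompose R (z * c g) b : M) = z * u := by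
      rw [Finset.sum_eq_single (1 : G)]
      · have h3 : z * c 1 ∈ R b := by
          have := hmul' hz (hcm 1); rwa [mul_one] at this
        rw [DirectSum.decompose_of_mem_same R h3]
      · intro g _ hg
        refine DirectSum.decompose_of_mem_ne R (hmul' hz (hcm g)) ?_
        intro hbg
        exact hg (mul_eq_left.mp hbg)
      · intro h1s
        have hz0 : DirectSum.decompose R (1 : M) 1 = 0 := DFinsupp.notMem_support_iff.mp h1s
        have hc10 : c 1 = 0 := by rw [hc]; simp [hz0]
        rw [hc10]
        simp
    exact (h2.trans h4).symm
  have key : ∀ z : M, z * u = z := by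
    intro z
    have hz : z ∈ ⨆ g, R g := htop ▸ Submodule.mem_top
    refine Submodule.iSup_induction (motive := fun z => z * u = z) _ hz
      (fun g m hm => hhom g m hm) (by show (0 : M) * u = 0; simp)
      (fun m m' h h' => by show (m + m') * u = m + m'; rw [add_mul, h, h'])
  have hueq : u = 1 := by have := key 1; rwa [one_mul] at this
  have hone : (1 : M) ∈ R 1 := hueq ▸ humem
  -- the projection onto the degree-one component, as a linear map
  set πL : M →ₗ[F] M :=
    { toFun := fun m => (DirectSum.decompose R m 1 : M)
      map_add' := fun m m' => by simp
      map_smul' := fun cc m => by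
        simp [DirectSum.decompose_smul, DirectSum.smul_apply] } with hπL
  -- main claim
  have main : ∀ a : G, ∀ x ∈ R a, x ≠ 0 →
      (IsUnit x ∧ x * x⁻¹ = 1 ∧ x⁻¹ * x = 1 ∧ x⁻¹ ∈ R a⁻¹) := by
    intro a x hx hx0
    set S : Set M := {m | ∃ g h r ss, r ∈ R g ∧ ss ∈ R h ∧ m = r * x * ss} with hS
    set J : Submodule F M := Submodule.span F S with hJ
    have hxJ : x ∈ J := Submodule.subset_span ⟨1, 1, 1, 1, hone, hone, by simp⟩
    -- J is closed under left multiplication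
    have hleft : ∀ (m y : M), y ∈ J → m * y ∈ J := by
      intro m y hy
      have hm : m ∈ ⨆ g, R g := htop ▸ Submodule.mem_top
      refine Submodule.iSup_induction (motive := fun m => m * y ∈ J) _ hm ?_
        (by show (0 : M) * y ∈ J; rw [zero_mul]; exact J.zero_mem) ?_
      · intro g m hmg
        refine Submodule.span_induction ?_ ?_ ?_ ?_ hy
        · rintro w ⟨g', h', r, ss, hr, hss, rfl⟩
          exact Submodule.subset_span
            ⟨g * g', h', m * r, ss, hmul' hmg hr, hss, by noncomm_ring⟩
        · simp
        · intro w w' _ _ hw hw'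
          rw [mul_add]; exact J.add_mem hw hw'
        · intro cc w _ hw
          rw [mul_smul_comm]; exact J.smul_mem _ hw
      · intro m m' h h'
        show (m + m') * y ∈ J
        rw [add_mul]; exact J.add_mem h h'
    have hright : ∀ (y m : M), y ∈ J → y * m ∈ J := by
      intro y m hy
      have hm : m ∈ ⨆ g, R g := htop ▸ Submodule.mem_top
      refine Submodule.iSup_induction (motive := fun m => y * m ∈ J) _ hm ?_
        (by show y * (0 : M) ∈ J; rw [mul_zero]; exact J.zero_mem) ?_
      · intro g m hmg
        refine Submodule.span_induction ?_ ?_ ?_ ?_ hy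
        · rintro w ⟨g', h', r, ss, hr, hss, rfl⟩
          exact Submodule.subset_span
            ⟨g', h' * g, r, ss * m, hr, hmul' hss hmg, by noncomm_ring⟩
        · simp
        · intro w w' _ _ hw hw'
          rw [add_mul]; exact J.add_mem hw hw'
        · intro cc w _ hw
          rw [smul_mul_assoc]; exact J.smul_mem _ hw
      · intro m m' h h'
        show y * (m + m') ∈ J
        rw [mul_add]; exact J.add_mem h h'
    -- 1 ∈ J since M_n(F) is simple
    have h1J : (1 : M) ∈ J := by
      obtain ⟨k, l, hkl⟩ : ∃ k l, x k l ≠ 0 := by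
        by_contra hcon
        push_neg at hcon
        exact hx0 (by ext p q; simp [hcon])
      rw [aux_one_eq_sum (F := F) (n := n)]
      refine Submodule.sum_mem _ fun i _ => ?_
      have hterm : Matrix.single i k (1 : F) * x * Matrix.single l i 1 ∈ J :=
        hright _ _ (hleft _ _ hxJ)
      have := J.smul_mem (x k l)⁻¹ hterm
      rwa [aux_basis_mul, smul_single, smul_eq_mul, inv_mul_cancel₀ hkl] at this
    -- extract a nonzero element of S of degree 1
    have hex : ∃ m, m ∈ S ∧ m ∈ R 1 ∧ m ≠ 0 := by
      by_contra hcon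
      push_neg at hcon
      have hS0 : ∀ m ∈ S, πL m = 0 := by
        rintro m ⟨g, h, r, ss, hr, hss, rfl⟩
        have hd : r * x * ss ∈ R (g * a * h) := hmul' (hmul' hr hx) hss
        by_cases hh : g * a * h = 1
        · have hd1 : r * x * ss ∈ R 1 := hh ▸ hd
          have : (DirectSum.decompose R (r * x * ss) 1 : M) = r * x * ss :=
            DirectSum.decompose_of_mem_same R hd1
          rw [hπL]
          simp only [LinearMap.coe_mk, AddHom.coe_mk]
          rw [this]
          exact hcon _ ⟨g, h, r, ss, hr, hss, rfl⟩ hd1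
        · exact DirectSum.decompose_of_mem_ne R hd hh
      have h1' : πL 1 ∈ Submodule.map πL J := ⟨1, h1J, rfl⟩
      rw [hJ, Submodule.map_span] at h1'
      have hsub : πL '' S ⊆ {0} := by
        rintro w ⟨m, hm, rfl⟩
        simp [hS0 m hm]
      have hle : Submodule.span F (πL '' S) ≤ ⊥ := by
        rw [← Submodule.span_zero_singleton (R := F) (M := M)]
        exact Submodule.span_mono hsub
      have : πL (1 : M) = 0 := by simpa using hle h1'
      rw [hπL] at this
      simp only [LinearMap.coe_mk, AddHom.coe_mk] at this
      rw [DirectSum.decompose_of_mem_same R hone] at this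
      exact h10 this
    obtain ⟨m, ⟨g, h, r, ss, hr, hss, rfl⟩, hm1, hm0⟩ := hex
    have hdm : r * x * ss ∈ R (g * a * h) := hmul' (hmul' hr hx) hss
    have hdeg : g * a * h = 1 := DirectSum.degree_eq_of_mem_mem R hdm hm1 hm0
    obtain ⟨c, hc⟩ : ∃ c : F, r * x * ss = c • (1 : M) :=
      aux_finrank_le_one_span (R 1) (hfine 1) hone hm1 h10
    have hc0 : c ≠ 0 := by rintro rfl; simp only [zero_smul] at hc; exact hm0 hc
    have h5 : (c⁻¹ • r) * (x * ss) = 1 := by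
      have hrxs : r * (x * ss) = c • 1 := by rw [← mul_assoc]; exact hc
      rw [smul_mul_assoc, hrxs, smul_smul, inv_mul_cancel₀ hc0, one_smul]
    have h6 : (x * ss) * (c⁻¹ • r) = 1 := mul_eq_one_comm.mp h5
    have h7 : x * (ss * (c⁻¹ • r)) = 1 := by rw [← mul_assoc]; exact h6
    have h8 : (ss * (c⁻¹ • r)) * x = 1 := mul_eq_one_comm.mp h7
    have hunit : IsUnit x := ⟨⟨x, ss * (c⁻¹ • r), h7, h8⟩, rfl⟩
    have hinv : x⁻¹ = ss * (c⁻¹ • r) := Matrix.inv_eq_right_inv h7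
    have hhg : h * g = a⁻¹ := by
      have h9 : (g * a)⁻¹ = h := inv_eq_of_mul_eq_one_right hdeg
      rw [← h9, _root_.mul_inv_rev, inv_mul_cancel_right]
    have hmem : x⁻¹ ∈ R a⁻¹ := by
      rw [hinv, mul_smul_comm]
      exact Submodule.smul_mem _ _ (hhg ▸ hmul' hss hr)
    exact ⟨hunit, by rw [hinv]; exact h7, by rw [hinv]; exact h8, hmem⟩
  constructor
  · intro a x hx hx0
    obtain ⟨h1, _, _, h4⟩ := main a x hx hx0
    exact ⟨h1, h4⟩
  · refine ⟨{ carrier := {a | R a ≠ ⊥}, mul_mem' := ?_, one_mem' := ?_, inv_mem' := ?_ },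
      fun a => Iff.rfl⟩
    · rintro a b ha hb
      obtain ⟨xa, hxa, hxa0⟩ := Submodule.ne_bot_iff _ |>.mp ha
      obtain ⟨xb, hxb, hxb0⟩ := Submodule.ne_bot_iff _ |>.mp hb
      obtain ⟨hua, _, _, _⟩ := main a xa hxa hxa0
      obtain ⟨hub, _, _, _⟩ := main b xb hxb hxb0
      refine Submodule.ne_bot_iff _ |>.mpr ⟨xa * xb, hmul' hxa hxb, ?_⟩
      exact (hua.mul hub).ne_zero
    · exact Submodule.ne_bot_iff _ |>.mpr ⟨1, hone, h10⟩
    · rintro a ha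
      obtain ⟨xa, hxa, hxa0⟩ := Submodule.ne_bot_iff _ |>.mp ha
      obtain ⟨_, hxx, _, hmem⟩ := main a xa hxa hxa0
      refine Submodule.ne_bot_iff _ |>.mpr ⟨xa⁻¹, hmem, ?_⟩
      intro h0
      rw [h0, mul_zero] at hxx
      exact h10 hxx.symm
end

section
/- Let F be an algebraically closed field of characteristic different from 2, G an abelian group, and suppose R = M_n(F) = ⊕_{g∈G} R_g is a fine G-grading (dim R_g ≤ 1) whose support T = {g : R_g ≠ 0} satisfies t² = e for all t ∈ T. Then there is a basis {X_t : t ∈ T} of R with X_t ∈ R_t for each t, such that X_t X_u = α(t,u) X_{tu} for all t, u ∈ T where every α(t,u) ∈ {1, −1}; in particular X_u² = α(u,u) I and X_u^{-1} = α(u,u) X_u for every u ∈ T. -/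
open Matrix

/-- If `M_n(F) = ⊕_g R_g` is a fine `G`-grading (`F` algebraically
closed, char F ≠ 2, `G` abelian) whose support `T = {g : R_g ≠ 0}` consists of
elements with `t² = e`, then there are homogeneous elements `X_t ∈ R_t` spanning the
components (hence forming a basis of `M_n(F)`) and signs `α(t,u) ∈ {1, −1}` such that
`X_t X_u = α(t,u) X_{tu}` for all `t, u ∈ T`; in particular `X_u² = α(u,u) I` and
`X_u⁻¹ = α(u,u) X_u` for every `u ∈ T`. -/
theorem stmt19 (F : Type*) [Field F] [IsAlgClosed F] (hchar : (2 : F) ≠ 0)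
    (G : Type*) [CommGroup G] [DecidableEq G]
    (n : ℕ)
    (R : G → Submodule F (Matrix (Fin n) (Fin n) F))
    (hinternal : DirectSum.IsInternal R)
    (hmul : ∀ a b : G, R a * R b ≤ R (a * b))
    (hfine : ∀ a : G, Module.finrank F (R a) ≤ 1)
    (hsupp : ∀ t : G, R t ≠ ⊥ → t * t = 1) :
    ∃ (X : G → Matrix (Fin n) (Fin n) F) (α : G → G → F),
      (∀ t : G, R t ≠ ⊥ → X t ∈ R t ∧ X t ≠ 0 ∧ R t = Submodule.span F {X t}) ∧
      (∀ t u : G, R t ≠ ⊥ → R u ≠ ⊥ →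
        (α t u = 1 ∨ α t u = -1) ∧ X t * X u = α t u • X (t * u)) ∧
      (∀ u : G, R u ≠ ⊥ →
        X u * X u = α u u • (1 : Matrix (Fin n) (Fin n) F) ∧
        (X u)⁻¹ = α u u • X u) := by
  classical
  set Mn := Matrix (Fin n) (Fin n) F with hMn
  rcases Nat.eq_zero_or_pos n with hn | hn
  · -- trivial case `n = 0`
    subst hn
    have hbot : ∀ t : G, R t = ⊥ := by
      intro t
      rw [eq_bot_iff]
      intro x _
      have : x = 0 := by ext i j; exact absurd i.2 (by omega)
      simp [this]
    exact ⟨fun _ => 0, fun _ _ => 1,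
      fun t ht => absurd (hbot t) ht,
      fun t u ht _ => absurd (hbot t) ht,
      fun u hu => absurd (hbot u) hu⟩
  haveI : NeZero n := ⟨hn.ne'⟩
  have hone0 : (1 : Mn) ≠ 0 := by
    intro h
    have := congrFun (congrFun h ⟨0, hn⟩) ⟨0, hn⟩
    rw [Matrix.one_apply_eq] at this
    exact one_ne_zero this
  haveI : Nontrivial Mn := ⟨1, 0, hone0⟩
  -- the homogeneous projections
  set e1 : DirectSum G (fun g => ↥(R g)) ≃ₗ[F] Mn :=
    LinearEquiv.ofBijective (DirectSum.coeLinearMap R) hinternal with he1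
  set π : G → Mn →ₗ[F] Mn := fun g =>
    (R g).subtype ∘ₗ (DirectSum.component F G (fun g => R g) g) ∘ₗ e1.symm.toLinearMap
    with hπ
  have hπ_mem : ∀ (g : G) (x : Mn), π g x ∈ R g := fun g x => (e1.symm x g).2
  have hπ_same : ∀ (g : G) (x : Mn), x ∈ R g → π g x = x := by
    intro g x hx
    have : e1.symm x g = ⟨x, hx⟩ := hinternal.ofBijective_coeLinearMap_of_mem hx
    simp only [hπ, LinearMap.comp_apply]
    rw [← DirectSum.apply_eq_component]
    erw [this]
    rfl
  have hπ_ne : ∀ (g h : G) (x : Mn), x ∈ R h → h ≠ g → π g x = 0 := by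
    intro g h x hx hne
    have : e1.symm x g = 0 := hinternal.ofBijective_coeLinearMap_of_mem_ne hne hx
    simp only [hπ, LinearMap.comp_apply]
    rw [← DirectSum.apply_eq_component]
    erw [this]
    rfl
  have htop : ∀ x : Mn, x ∈ ⨆ g, R g := by
    rw [hinternal.submodule_iSup_eq_top]; intro x; trivial
  -- multiplying by a homogeneous element shifts projections
  have hπ_mul_left : ∀ (h : G) (y : Mn), y ∈ R h → ∀ (g : G) (x : Mn),
      y * π g x = π (h * g) (y * x) := by
    intro h y hy g x
    refine Submodule.iSup_induction (motive := fun x : Mn => y * π g x = π (h * g) (y * x))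
      R (htop x) ?_ ?_ ?_
    · intro g' x' hx'
      by_cases hg : g' = g
      · subst hg
        rw [hπ_same g' x' hx', hπ_same (h * g') (y * x') (hmul h g' (Submodule.mul_mem_mul hy hx'))]
      · rw [hπ_ne g g' x' hx' hg,
          hπ_ne (h * g) (h * g') (y * x') (hmul h g' (Submodule.mul_mem_mul hy hx'))
            (fun hc => hg (mul_left_cancel hc)), mul_zero]
    · simp only [map_zero, mul_zero]
    · intro x₁ x₂ h1 h2
      rw [map_add, mul_add, h1, h2, mul_add, map_add]
  -- `1 ∈ R 1`
  have hone_mem : (1 : Mn) ∈ R 1 := by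
    have hu : π 1 (1 : Mn) ∈ R 1 := hπ_mem 1 1
    have key : ∀ y : Mn, y * π 1 (1 : Mn) = y := by
      intro y
      refine Submodule.iSup_induction (motive := fun y : Mn => y * π 1 (1 : Mn) = y)
        R (htop y) ?_ ?_ ?_
      · intro h y' hy'
        rw [hπ_mul_left h y' hy' 1 1, mul_one, mul_one, hπ_same h y' hy']
      · simp
      · intro y₁ y₂ h1 h2
        show (y₁ + y₂) * (π 1) 1 = y₁ + y₂
        rw [add_mul, h1, h2]
    have := key 1
    rw [one_mul] at this
    rwa [this] at hu
  -- one-dimensionality consequences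
  have hspan : ∀ (g : G) (x : Mn), x ∈ R g → x ≠ 0 → R g = Submodule.span F {x} := by
    intro g x hx hx0
    have h1 : Submodule.span F {x} ≤ R g := by
      rw [Submodule.span_le, Set.singleton_subset_iff]; exact hx
    refine (Submodule.eq_of_le_of_finrank_le h1 ?_).symm
    rw [finrank_span_singleton hx0]
    exact hfine g
  have hcoe : ∀ (g : G) (x : Mn), x ∈ R g → x ≠ 0 → ∀ z : Mn, z ∈ R g →
      ∃ c : F, z = c • x := by
    intro g x hx hx0 z hz
    rw [hspan g x hx hx0, Submodule.mem_span_singleton] at hz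
    obtain ⟨c, hc⟩ := hz
    exact ⟨c, hc.symm⟩
  -- scalar matrices are units
  have hscalar_unit : ∀ c : F, c ≠ 0 → IsUnit (c • (1 : Mn)) := by
    intro c hc
    rw [Matrix.isUnit_iff_isUnit_det, Matrix.det_smul, Matrix.det_one, mul_one]
    exact (pow_ne_zero _ hc).isUnit
  -- nonzero homogeneous elements are invertible
  have hunit : ∀ (t : G) (x : Mn), x ∈ R t → x ≠ 0 → IsUnit x := by
    intro t x hx hx0
    obtain ⟨k, l, hkl⟩ : ∃ k l, x k l ≠ 0 := by
      by_contra hc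
      push_neg at hc
      exact hx0 (by ext i j; exact hc i j)
    set S : Set Mn := {y | ∃ g h A B, A ∈ R g ∧ B ∈ R h ∧ y = A * x * B} with hS
    have key1 : ∀ (g : G) (B : Mn), B ∈ R g → ∀ a : Mn, a * x * B ∈ Submodule.span F S := by
      intro g B hB a
      refine Submodule.iSup_induction (motive := fun a : Mn => a * x * B ∈ Submodule.span F S)
        R (htop a) ?_ ?_ ?_
      · intro g' a' ha'
        exact Submodule.subset_span ⟨g', g, a', B, ha', hB, rfl⟩
      · simp
      · intro a₁ a₂ h1 h2
        show (a₁ + a₂) * x * B ∈ Submodule.span F S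
        rw [add_mul, add_mul]; exact Submodule.add_mem _ h1 h2
    have key : ∀ b a : Mn, a * x * b ∈ Submodule.span F S := by
      intro b
      refine Submodule.iSup_induction
        (motive := fun b : Mn => ∀ a : Mn, a * x * b ∈ Submodule.span F S) R (htop b) ?_ ?_ ?_
      · intro g' b' hb' a; exact key1 g' b' hb' a
      · intro a; simp
      · intro b₁ b₂ h1 h2 a
        show a * x * (b₁ + b₂) ∈ Submodule.span F S
        rw [mul_add]; exact Submodule.add_mem _ (h1 a) (h2 a)
    -- 1 is an explicit combination of the A x B
    have hE : ∀ i : Fin n, Matrix.single i k (1 : F) * x * Matrix.single l i 1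
        = Matrix.single i i (x k l) := by
      intro i
      ext a b
      by_cases hb : b = i
      · subst hb
        by_cases ha : a = b
        · subst ha
          simp only [Matrix.mul_single_apply_same, mul_one,
            Matrix.single_apply_same]
          rw [Matrix.single_mul_apply_same, one_mul]
        · simp only [Matrix.mul_single_apply_same, mul_one,
            Matrix.single_apply_of_row_ne (Ne.symm ha)]
          exact Matrix.single_mul_apply_of_ne _ _ _ a l ha x
      · simp only [Matrix.mul_single_apply_of_ne _ _ _ a b hb,
          Matrix.single_apply_of_col_ne _ _ (Ne.symm hb)]
    have hsum : ∑ i : Fin n, (x k l)⁻¹ • (Matrix.single i k (1 : F) * x * Matrix.single l i 1)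
        = (1 : Mn) := by
      have : ∀ i : Fin n,
          (x k l)⁻¹ • (Matrix.single i k (1 : F) * x * Matrix.single l i 1)
          = Matrix.single i i (1 : F) := by
        intro i
        rw [hE i, Matrix.smul_single, smul_eq_mul, inv_mul_cancel₀ hkl]
      rw [Finset.sum_congr rfl (fun i _ => this i)]
      ext a b
      rw [Matrix.sum_apply]
      by_cases hab : a = b
      · subst hab
        rw [Matrix.one_apply_eq, Finset.sum_eq_single a
          (fun i _ hi => Matrix.single_apply_of_row_ne hi _ _ _)
          (by intro h; exact absurd (Finset.mem_univ a) h)]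
        rw [Matrix.single_apply_same]
      · rw [Matrix.one_apply_ne hab, Finset.sum_eq_zero]
        intro i _
        by_cases hia : i = a
        · subst hia; exact Matrix.single_apply_of_col_ne _ _ (fun h => hab h) _
        · exact Matrix.single_apply_of_row_ne hia _ _ _
    have h1span : (1 : Mn) ∈ Submodule.span F S := by
      rw [← hsum]
      exact Submodule.sum_mem _ fun i _ => Submodule.smul_mem _ _ (key _ _)
    -- find a spanning element with nonzero projection to `R 1`
    have hex : ∃ s ∈ S, π 1 s ≠ 0 := by
      by_contra hc
      push_neg at hc
      have hz : ∀ y ∈ Submodule.span F S, π 1 y = 0 := by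
        intro y hy
        refine Submodule.span_induction (fun s hs => hc s hs) (map_zero _) ?_ ?_ hy
        · intro y₁ y₂ _ _ h1 h2; rw [map_add, h1, h2, add_zero]
        · intro c y₁ _ h1; rw [_root_.map_smul, h1, smul_zero]
      have := hz 1 h1span
      rw [hπ_same 1 1 hone_mem] at this
      exact hone0 this
    obtain ⟨s, ⟨g, h, A, B, hA, hB, rfl⟩, hs0⟩ := hex
    have hsmem : A * x * B ∈ R (g * t * h) :=
      hmul (g * t) h (Submodule.mul_mem_mul (hmul g t (Submodule.mul_mem_mul hA hx)) hB)
    have hgth : g * t * h = 1 := by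
      by_contra hne
      exact hs0 (hπ_ne 1 (g * t * h) _ hsmem hne)
    rw [hgth] at hsmem
    have hsne : A * x * B ≠ 0 := by
      intro h0; rw [h0, map_zero] at hs0; exact hs0 rfl
    obtain ⟨c, hc⟩ := hcoe 1 (1 : Mn) hone_mem hone0 _ hsmem
    have hc0 : c ≠ 0 := by
      intro h0; rw [h0, zero_smul] at hc; exact hsne hc
    have hAxB_unit : IsUnit (A * x * B) := hc ▸ hscalar_unit c hc0
    rw [Matrix.isUnit_iff_isUnit_det, Matrix.det_mul, Matrix.det_mul] at hAxB_unit
    rw [Matrix.isUnit_iff_isUnit_det]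
    have hdet : A.det * x.det * B.det ≠ 0 := hAxB_unit.ne_zero
    exact isUnit_iff_ne_zero.mpr (fun h0 => hdet (by rw [h0, mul_zero, zero_mul]))
  -- the support is finite
  have hTfin : {t : G | R t ≠ ⊥}.Finite := by
    haveI : Fintype {t : G // R t ≠ ⊥} :=
      (hinternal.submodule_iSupIndep).fintypeNeBotOfFiniteDimensional
    have hf : Finite {t : G // R t ≠ ⊥} := Finite.of_fintype _
    exact Set.finite_coe_iff.mp hf
  set Tfin : Finset G := hTfin.toFinset with hTfinDef
  have hTmem : ∀ t : G, t ∈ Tfin ↔ R t ≠ ⊥ := fun t => hTfin.mem_toFinset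
  have hR1 : R 1 ≠ ⊥ := (Submodule.ne_bot_iff _).mpr ⟨1, hone_mem, hone0⟩
  -- the main induction: extend a partial system of signed generators to all of the support
  have step : ∀ m : ℕ, ∀ s : Finset G,
      (Tfin \ s).card ≤ m → (1 : G) ∈ s → (∀ a ∈ s, ∀ b ∈ s, a * b ∈ s) → s ⊆ Tfin →
      ∀ X : G → Mn, X 1 = 1 → (∀ t ∈ s, X t ∈ R t ∧ X t ≠ 0) →
      (∀ t ∈ s, ∀ u ∈ s, ∃ c : F, (c = 1 ∨ c = -1) ∧ X t * X u = c • X (t * u)) →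
      ∃ X' : G → Mn, X' 1 = 1 ∧ (∀ t ∈ Tfin, X' t ∈ R t ∧ X' t ≠ 0) ∧
        (∀ t ∈ Tfin, ∀ u ∈ Tfin, ∃ c : F, (c = 1 ∨ c = -1) ∧ X' t * X' u = c • X' (t * u)) := by
    intro m
    induction m with
    | zero =>
      intro s hcard h1s hcl hsub X hX1 hXmem hXmul
      have hTs : Tfin ⊆ s := by
        rw [← Finset.sdiff_eq_empty_iff_subset]
        exact Finset.card_eq_zero.mp (Nat.le_zero.mp hcard)
      exact ⟨X, hX1, fun t ht => hXmem t (hTs ht), fun t ht u hu => hXmul t (hTs ht) u (hTs hu)⟩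
    | succ m ih =>
      intro s hcard h1s hcl hsub X hX1 hXmem hXmul
      by_cases hTs : Tfin ⊆ s
      · exact ⟨X, hX1, fun t ht => hXmem t (hTs ht), fun t ht u hu => hXmul t (hTs ht) u (hTs hu)⟩
      obtain ⟨t, htT, hts⟩ := Finset.not_subset.mp hTs
      have hRt : R t ≠ ⊥ := (hTmem t).mp htT
      have htt : t * t = 1 := hsupp t hRt
      have hss : ∀ a ∈ s, R a ≠ ⊥ := fun a ha => (hTmem a).mp (hsub ha)
      have haa : ∀ a ∈ s, a * a = 1 := fun a ha => hsupp a (hss a ha)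
      -- normalized generator of `R t`
      obtain ⟨w, hw, hw0⟩ := (Submodule.ne_bot_iff (R t)).mp hRt
      have hww : w * w ∈ R 1 := by
        have := hmul t t (Submodule.mul_mem_mul hw hw); rwa [htt] at this
      obtain ⟨c0, hc0eq⟩ := hcoe 1 1 hone_mem hone0 (w * w) hww
      have hc00 : c0 ≠ 0 := by
        intro h0
        rw [h0, zero_smul] at hc0eq
        exact ((hunit t w hw hw0).mul (hunit t w hw hw0)).ne_zero hc0eq
      obtain ⟨lam, hlam⟩ := IsAlgClosed.exists_pow_nat_eq (k := F) c0⁻¹ (n := 2) two_pos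
      have hlam0 : lam ≠ 0 := by
        intro h0
        rw [h0] at hlam
        exact inv_ne_zero hc00 (by rw [← hlam]; ring)
      obtain ⟨y, hymem, hy0, hyy⟩ : ∃ y : Mn, y ∈ R t ∧ y ≠ 0 ∧ y * y = 1 := by
        refine ⟨lam • w, Submodule.smul_mem _ _ hw, smul_ne_zero hlam0 hw0, ?_⟩
        rw [smul_mul_assoc, mul_smul_comm, smul_smul, hc0eq, smul_smul, ← pow_two, hlam,
          inv_mul_cancel₀ hc00, one_smul]
      have hyunit : IsUnit y := hunit t y hymem hy0
      -- commutation of `y` with the chosen generators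
      have hbeta : ∀ a ∈ s, ∃ β : F, (β = 1 ∨ β = -1) ∧ X a * y = β • (y * X a) := by
        intro a ha
        obtain ⟨hXa, hXa0⟩ := hXmem a ha
        have h1m : y * X a ∈ R (t * a) := hmul t a (Submodule.mul_mem_mul hymem hXa)
        have h10 : y * X a ≠ 0 := (hyunit.mul (hunit a (X a) hXa hXa0)).ne_zero
        have h2m : X a * y ∈ R (t * a) := by
          have := hmul a t (Submodule.mul_mem_mul hXa hymem); rwa [mul_comm a t] at this
        obtain ⟨β, hβ⟩ := hcoe (t * a) (y * X a) h1m h10 (X a * y) h2m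
        have key : (β * β) • X a = X a := by
          have e1 : X a * y * y = X a := by rw [mul_assoc, hyy, mul_one]
          calc (β * β) • X a = β • (β • ((y * y) * X a)) := by rw [hyy, one_mul, smul_smul]
            _ = β • (β • (y * (y * X a))) := by rw [mul_assoc]
            _ = β • (y * (β • (y * X a))) := by rw [mul_smul_comm]
            _ = β • (y * (X a * y)) := by rw [hβ]
            _ = (β • (y * X a)) * y := by rw [smul_mul_assoc, mul_assoc]
            _ = X a * y * y := by rw [← hβ]
            _ = X a := e1
        have hβ2 : β * β = 1 := by
          by_contra hne
          have : (β * β - 1) • X a = 0 := by rw [sub_smul, key, one_smul, sub_self]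
          rcases smul_eq_zero.mp this with h' | h'
          · exact hne (sub_eq_zero.mp h')
          · exact hXa0 h'
        exact ⟨β, mul_self_eq_one_iff.mp hβ2, hβ⟩
      -- the new set and the extended family
      have hdisj : ∀ a ∈ s, t * a ∉ s := by
        intro a ha hmem
        apply hts
        have h2 := hcl _ hmem _ ha
        rwa [mul_assoc, haa a ha, mul_one] at h2
      set s' : Finset G := s ∪ s.image (fun a => t * a) with hs'def
      have hmem' : ∀ u : G, u ∈ s' ↔ u ∈ s ∨ t * u ∈ s := by
        intro u
        constructor
        · intro hu
          rcases Finset.mem_union.mp hu with h | h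
          · exact Or.inl h
          · obtain ⟨a, ha, rfl⟩ := Finset.mem_image.mp h
            right; rwa [← mul_assoc, htt, one_mul]
        · intro hu
          rcases hu with h | h
          · exact Finset.mem_union_left _ h
          · refine Finset.mem_union_right _ (Finset.mem_image.mpr ⟨t * u, h, ?_⟩)
            rw [← mul_assoc, htt, one_mul]
      have h1s' : (1 : G) ∈ s' := Finset.mem_union_left _ h1s
      have hcl' : ∀ a ∈ s', ∀ b ∈ s', a * b ∈ s' := by
        intro a ha b hb
        rcases (hmem' a).mp ha with ha' | ha' <;> rcases (hmem' b).mp hb with hb' | hb'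
        · exact (hmem' _).mpr (Or.inl (hcl a ha' b hb'))
        · refine (hmem' _).mpr (Or.inr ?_)
          rw [mul_left_comm]
          exact hcl a ha' _ hb'
        · refine (hmem' _).mpr (Or.inr ?_)
          rw [← mul_assoc]
          exact hcl _ ha' b hb'
        · refine (hmem' _).mpr (Or.inl ?_)
          have h3 := hcl _ ha' _ hb'
          rwa [mul_mul_mul_comm, htt, one_mul] at h3
      have hsub' : s' ⊆ Tfin := by
        intro u hu
        rcases (hmem' u).mp hu with h | h
        · exact hsub h
        · obtain ⟨hXm, hX0⟩ := hXmem _ h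
          have h1m := hmul t (t * u) (Submodule.mul_mem_mul hymem hXm)
          rw [← mul_assoc, htt, one_mul] at h1m
          exact (hTmem u).mpr ((Submodule.ne_bot_iff _).mpr
            ⟨_, h1m, (hyunit.mul (hunit _ _ hXm hX0)).ne_zero⟩)
      set X' : G → Mn := fun u => if u ∈ s then X u else y * X (t * u) with hX'def
      have hX'in : ∀ u ∈ s, X' u = X u := fun u hu => if_pos hu
      have hX'out : ∀ u, u ∉ s → X' u = y * X (t * u) := fun u hu => if_neg hu
      have hX'1 : X' 1 = 1 := by rw [hX'in 1 h1s, hX1]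
      have hX'mem : ∀ u ∈ s', X' u ∈ R u ∧ X' u ≠ 0 := by
        intro u hu
        by_cases h : u ∈ s
        · rw [hX'in u h]; exact hXmem u h
        · have htu : t * u ∈ s := ((hmem' u).mp hu).resolve_left h
          rw [hX'out u h]
          obtain ⟨hXm, hX0⟩ := hXmem _ htu
          have h1m := hmul t (t * u) (Submodule.mul_mem_mul hymem hXm)
          rw [← mul_assoc, htt, one_mul] at h1m
          exact ⟨h1m, (hyunit.mul (hunit _ _ hXm hX0)).ne_zero⟩
      have hX'mul : ∀ u ∈ s', ∀ v ∈ s',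
          ∃ c : F, (c = 1 ∨ c = -1) ∧ X' u * X' v = c • X' (u * v) := by
        intro u hu v hv
        by_cases hus : u ∈ s <;> by_cases hvs : v ∈ s
        · obtain ⟨c, hc1, hc2⟩ := hXmul u hus v hvs
          exact ⟨c, hc1, by rw [hX'in u hus, hX'in v hvs, hX'in _ (hcl u hus v hvs), hc2]⟩
        · -- u ∈ s, v ∉ s
          have hb : t * v ∈ s := ((hmem' v).mp hv).resolve_left hvs
          obtain ⟨c, hc1, hc2⟩ := hXmul u hus _ hb
          obtain ⟨β, hβ1, hβ2⟩ := hbeta u hus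
          have huv : u * v ∉ s := by
            intro hmm
            apply hdisj _ (hcl u hus _ hb)
            rw [show t * (u * (t * v)) = u * v from by
              rw [mul_left_comm u t v, ← mul_assoc, htt, one_mul]]
            exact hmm
          refine ⟨β * c, ?_, ?_⟩
          · rcases hβ1 with h | h <;> rcases hc1 with h' | h' <;> rw [h, h'] <;> norm_num
          · rw [hX'in u hus, hX'out v hvs, hX'out _ huv, mul_left_comm t u v]
            calc X u * (y * X (t * v)) = (X u * y) * X (t * v) := by rw [mul_assoc]
              _ = (β • (y * X u)) * X (t * v) := by rw [hβ2]
              _ = β • (y * (X u * X (t * v))) := by rw [smul_mul_assoc, mul_assoc]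
              _ = β • (y * (c • X (u * (t * v)))) := by rw [hc2]
              _ = (β * c) • (y * X (u * (t * v))) := by rw [mul_smul_comm, smul_smul]
        · -- u ∉ s, v ∈ s
          have ha : t * u ∈ s := ((hmem' u).mp hu).resolve_left hus
          obtain ⟨c, hc1, hc2⟩ := hXmul _ ha v hvs
          have huv : u * v ∉ s := by
            intro hmm
            apply hdisj _ (hcl _ ha v hvs)
            rw [show t * ((t * u) * v) = u * v from by
              rw [← mul_assoc, ← mul_assoc, htt, one_mul]]
            exact hmm
          refine ⟨c, hc1, ?_⟩
          rw [hX'out u hus, hX'in v hvs, hX'out _ huv, ← mul_assoc t u v]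
          calc (y * X (t * u)) * X v = y * (X (t * u) * X v) := by rw [mul_assoc]
            _ = y * (c • X ((t * u) * v)) := by rw [hc2]
            _ = c • (y * X ((t * u) * v)) := by rw [mul_smul_comm]
        · -- u ∉ s, v ∉ s
          have ha : t * u ∈ s := ((hmem' u).mp hu).resolve_left hus
          have hb : t * v ∈ s := ((hmem' v).mp hv).resolve_left hvs
          obtain ⟨c, hc1, hc2⟩ := hXmul _ ha _ hb
          obtain ⟨β, hβ1, hβ2⟩ := hbeta _ ha
          have huv : u * v ∈ s := by
            have h3 := hcl _ ha _ hb
            rwa [mul_mul_mul_comm, htt, one_mul] at h3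
          refine ⟨β * c, ?_, ?_⟩
          · rcases hβ1 with h | h <;> rcases hc1 with h' | h' <;> rw [h, h'] <;> norm_num
          · rw [hX'out u hus, hX'out v hvs, hX'in _ huv,
              show u * v = (t * u) * (t * v) from by rw [mul_mul_mul_comm, htt, one_mul]]
            calc (y * X (t * u)) * (y * X (t * v))
                = y * ((X (t * u) * y) * X (t * v)) := by
                  rw [mul_assoc, ← mul_assoc (X (t * u)) y]
              _ = y * ((β • (y * X (t * u))) * X (t * v)) := by rw [hβ2]
              _ = β • (y * ((y * X (t * u)) * X (t * v))) := by
                  rw [smul_mul_assoc, mul_smul_comm]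
              _ = β • ((y * y) * (X (t * u) * X (t * v))) := by
                  rw [mul_assoc y (X (t * u)), ← mul_assoc y y]
              _ = β • (X (t * u) * X (t * v)) := by rw [hyy, one_mul]
              _ = β • (c • X ((t * u) * (t * v))) := by rw [hc2]
              _ = (β * c) • X ((t * u) * (t * v)) := by rw [smul_smul]
      -- the new set is strictly bigger inside `Tfin`
      have hts' : t ∈ s' := (hmem' t).mpr (Or.inr (by rwa [htt]))
      have hcard' : (Tfin \ s').card ≤ m := by
        have hssub : s ⊆ s' := Finset.subset_union_left
        have hsub2 : Tfin \ s' ⊆ Tfin \ s := Finset.sdiff_subset_sdiff (le_refl _) hssub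
        have hlt : (Tfin \ s').card < (Tfin \ s).card := by
          apply Finset.card_lt_card
          rw [Finset.ssubset_iff_of_subset hsub2]
          exact ⟨t, Finset.mem_sdiff.mpr ⟨htT, hts⟩,
            fun hmem => (Finset.mem_sdiff.mp hmem).2 hts'⟩
        exact Nat.lt_succ_iff.mp (lt_of_lt_of_le hlt hcard)
      exact ih s' hcard' h1s' hcl' hsub' X' hX'1 hX'mem hX'mul
  -- run the induction starting from the trivial system on `{1}`
  obtain ⟨Xf, hXf1, hXfmem, hXfmul⟩ := step (Tfin \ {1}).card {1} (le_refl _)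
    (Finset.mem_singleton_self 1)
    (by
      intro a ha b hb
      obtain rfl := Finset.mem_singleton.mp ha
      obtain rfl := Finset.mem_singleton.mp hb
      rw [one_mul]; exact Finset.mem_singleton_self 1)
    (by
      intro a ha
      obtain rfl := Finset.mem_singleton.mp ha
      exact (hTmem 1).mpr hR1)
    (fun _ => 1) rfl
    (by
      intro u hu
      obtain rfl := Finset.mem_singleton.mp hu
      exact ⟨hone_mem, hone0⟩)
    (by
      intro u hu v hv
      exact ⟨1, Or.inl rfl, by rw [one_smul, one_mul]⟩)
  have hprod : ∀ t u : G, R t ≠ ⊥ → R u ≠ ⊥ →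
      ∃ c : F, (c = 1 ∨ c = -1) ∧ Xf t * Xf u = c • Xf (t * u) :=
    fun t u ht hu => hXfmul t ((hTmem t).mpr ht) u ((hTmem u).mpr hu)
  set αf : G → G → F :=
    fun t u => if h : R t ≠ ⊥ ∧ R u ≠ ⊥ then (hprod t u h.1 h.2).choose else 1 with hαdef
  have hα : ∀ (t u : G) (ht : R t ≠ ⊥) (hu : R u ≠ ⊥), αf t u = (hprod t u ht hu).choose := by
    intro t u ht hu
    simp only [hαdef]
    rw [dif_pos ⟨ht, hu⟩]
  refine ⟨Xf, αf, ?_, ?_, ?_⟩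
  · intro t ht
    obtain ⟨hm, h0⟩ := hXfmem t ((hTmem t).mpr ht)
    exact ⟨hm, h0, hspan t _ hm h0⟩
  · intro t u ht hu
    obtain ⟨hc1, hc2⟩ := (hprod t u ht hu).choose_spec
    rw [hα t u ht hu]
    exact ⟨hc1, hc2⟩
  · intro u hu
    obtain ⟨hc1, hc2⟩ := (hprod u u hu hu).choose_spec
    rw [hα u u hu hu]
    set cv : F := (hprod u u hu hu).choose with hcv
    have hXuu : Xf (u * u) = 1 := by rw [hsupp u hu, hXf1]
    have hsq : Xf u * Xf u = cv • (1 : Mn) := by rw [hc2, hXuu]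
    have hcc : cv * cv = 1 := by rcases hc1 with h' | h' <;> rw [h'] <;> ring
    refine ⟨hsq, ?_⟩
    apply Matrix.inv_eq_right_inv
    rw [mul_smul_comm, hsq, smul_smul, hcc, one_smul]
end
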